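/- arXiv:2412.18875 — 3 statements merged into one kernel-verified Lean document; each statement's English description precedes it below -/
import Mathlib

section
/- The pseudometric space (Π_{≤k}, d_ω) is compact; equivalently, every sequence of classifications consisting of at most k intervals has a subsequence that converges in the pseudometric d_ω to some classification in Π_{≤k}. -/
open MeasureTheory Set Filter Topology
open scoped ENNReal NNReal symmDiff

noncomputable section
namespace CCaux

def halfL (bit : Bool) (t : ℝ) : Set ℝ := if bit then Set.Ici t else Set.Ioi t

def halfR (bit : Bool) (t : ℝ) : Set ℝ := if bit then Set.Iic t else Set.Iio t

lemma halfL_subset_Ici {bit : Bool} {t : ℝ} : halfL bit t ⊆ Set.Ici t := by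
  cases bit <;> simp [halfL, Set.Ioi_subset_Ici_self]

lemma halfR_subset_Iic {bit : Bool} {t : ℝ} : halfR bit t ⊆ Set.Iic t := by
  cases bit <;> simp [halfR, Set.Iio_subset_Iic_self]

lemma ordConnected_eq_halfs {C : Set ℝ} (hC : C.OrdConnected) (hne : C.Nonempty)
    (hbb : BddBelow C) (hba : BddAbove C) {lb rb : Bool}
    (hl : sInf C ∈ C ↔ lb = true) (hr : sSup C ∈ C ↔ rb = true) :
    C = halfL lb (sInf C) ∩ halfR rb (sSup C) := by
  ext x
  constructor
  · intro hx
    have h1 : sInf C ≤ x := csInf_le hbb hx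
    have h2 : x ≤ sSup C := le_csSup hba hx
    constructor
    · cases lb with
      | true => exact h1
      | false =>
        have : sInf C ≠ x := by
          rintro rfl; simp at hl; exact hl hx
        exact lt_of_le_of_ne h1 this
    · cases rb with
      | true => exact h2
      | false =>
        have : x ≠ sSup C := by
          rintro rfl; simp at hr; exact hr hx
        exact lt_of_le_of_ne h2 this
  · rintro ⟨hxl, hxr⟩
    have h1 : sInf C ≤ x := halfL_subset_Ici hxl
    have h2 : x ≤ sSup C := halfR_subset_Iic hxr
    rcases eq_or_lt_of_le h1 with heq | hlt
    · -- x = sInf C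
      cases lb with
      | true => rw [← heq]; exact hl.mpr rfl
      | false => simp [halfL, ← heq] at hxl
    · rcases eq_or_lt_of_le h2 with heq | hlt2
      · cases rb with
        | true => rw [heq]; exact hr.mpr rfl
        | false => simp [halfR, heq] at hxr
      · obtain ⟨y, hy, hyx⟩ := exists_lt_of_csInf_lt hne hlt
        obtain ⟨z, hz, hxz⟩ := exists_lt_of_lt_csSup hne hlt2
        exact hC.out hy hz ⟨hyx.le, hxz.le⟩

lemma plt_trichotomy {C C' : Set ℝ} (hC : C.OrdConnected) (hC' : C'.OrdConnected)
    (hd : Disjoint C C') (hne : C.Nonempty) (hne' : C'.Nonempty) :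
    (∀ x ∈ C, ∀ y ∈ C', x < y) ∨ (∀ x ∈ C', ∀ y ∈ C, x < y) := by
  by_contra hcon
  push_neg at hcon
  obtain ⟨⟨x, hx, y, hy, hyx⟩, ⟨a, ha, b, hb, hba⟩⟩ := hcon
  -- y ∈ C', y ≤ x ∈ C ; b ∈ C, b ≤ a ∈ C'
  rcases le_total x a with h | h
  · have hxy : y < x := lt_of_le_of_ne hyx (by rintro rfl; exact (Set.disjoint_left.mp hd hx) hy)
    have : x ∈ C' := hC'.out hy ha ⟨hxy.le, h⟩
    exact (Set.disjoint_left.mp hd hx) this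
  · have hba' : b < a := lt_of_le_of_ne hba (by rintro rfl; exact (Set.disjoint_left.mp hd hb) ha)
    have : a ∈ C := hC.out hb hx ⟨hba'.le, h⟩
    exact (Set.disjoint_left.mp hd this) ha

def tauKey (E : Set ℝ) : ℝ ×ₗ ℝ := toLex (sInf E, sSup E)

lemma tauKey_lt {E E' : Set ℝ} (hne : E.Nonempty) (hne' : E'.Nonempty)
    (hsub : E ⊆ Set.Icc (0:ℝ) 1) (hsub' : E' ⊆ Set.Icc (0:ℝ) 1)
    (hplt : ∀ x ∈ E, ∀ y ∈ E', x < y) : tauKey E < tauKey E' := by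
  have hbbE : BddBelow E := ⟨0, fun x hx => (hsub hx).1⟩
  have hbaE : BddAbove E := ⟨1, fun x hx => (hsub hx).2⟩
  have hbbE' : BddBelow E' := ⟨0, fun x hx => (hsub' hx).1⟩
  have hbaE' : BddAbove E' := ⟨1, fun x hx => (hsub' hx).2⟩
  have hii : sInf E ≤ sInf E' := by
    obtain ⟨x, hx⟩ := hne
    exact le_trans (csInf_le hbbE hx) (le_csInf hne' (fun y hy => (hplt x hx y hy).le))
  have hss : sSup E ≤ sSup E' := by
    obtain ⟨y, hy⟩ := hne'
    exact le_trans (csSup_le hne (fun x hx => (hplt x hx y hy).le)) (le_csSup hbaE' hy)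
  have hne_key : ¬ (sInf E = sInf E' ∧ sSup E = sSup E') := by
    rintro ⟨h1, h2⟩
    -- then all of E ≤ sInf E' = sInf E, so sSup E ≤ sInf E, forcing E = {sInf E} = E'
    have hEle : ∀ x ∈ E, x ≤ sInf E' := fun x hx =>
      le_csInf hne' (fun y hy => (hplt x hx y hy).le)
    have h3 : sSup E ≤ sInf E := by rw [h1]; exact csSup_le hne hEle
    have h4 : sInf E ≤ sSup E := csInf_le_csSup hne hbbE hbaE
    have h5 : sSup E = sInf E := le_antisymm h3 h4
    obtain ⟨x, hx⟩ := hne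
    obtain ⟨y, hy⟩ := hne'
    have hxE : x = sInf E := le_antisymm (h5 ▸ le_csSup hbaE hx) (csInf_le hbbE hx)
    have hyE : y = sInf E := by
      have hy1 : sInf E ≤ y := h1 ▸ csInf_le hbbE' hy
      have hy2 : y ≤ sInf E := by
        rw [← h5, h2]; exact le_csSup hbaE' hy
      exact le_antisymm hy2 hy1
    have := hplt x hx y hy
    rw [hxE, hyE] at this
    exact lt_irrefl _ this
  rcases lt_or_eq_of_le hii with h | h
  · exact Prod.Lex.lt_iff.mpr (Or.inl h)
  · exact Prod.Lex.lt_iff.mpr (Or.inr ⟨h, lt_of_le_of_ne hss (by tauto)⟩)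

lemma tendsto_meas_Ioc {ω : Measure ℝ} [IsFiniteMeasure ω] {a : ℕ → ℝ} {t : ℝ}
    (h : Tendsto a atTop (𝓝 t)) :
    Tendsto (fun m => ω (Set.Ioc t (a m))) atTop (𝓝 0) := by
  rw [ENNReal.tendsto_atTop_zero]
  intro ε hε
  have hseq : Tendsto (fun n : ℕ => t + 1/(n+1)) atTop (𝓝 t) := by
    have := tendsto_one_div_add_atTop_nhds_zero_nat (𝕜 := ℝ)
    simpa using (tendsto_const_nhds (x := t)).add this
  have key : Tendsto (fun n : ℕ => ω (Set.Ioc t (t + 1/(n+1)))) atTop (𝓝 0) := by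
    have hanti : Antitone (fun n : ℕ => Set.Ioc t (t + 1/(n+1))) := by
      intro m n hmn
      apply Set.Ioc_subset_Ioc le_rfl
      have : (1:ℝ)/(n+1) ≤ 1/(m+1) := by
        apply one_div_le_one_div_of_le (by positivity)
        exact_mod_cast by omega
      linarith
    have hint : (⋂ n : ℕ, Set.Ioc t (t + 1/(n+1))) = ∅ := by
      ext x
      simp only [Set.mem_iInter, Set.mem_Ioc, Set.mem_empty_iff_false, iff_false, not_forall]
      by_contra hcon
      push_neg at hcon
      have hx1 : t < x := (hcon 0).1
      have hx2 : x ≤ t := ge_of_tendsto' hseq (fun n => (hcon n).2)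
      linarith
    have := tendsto_measure_iInter_atTop (μ := ω)
      (fun n => measurableSet_Ioc.nullMeasurableSet)
      hanti ⟨0, measure_ne_top ω _⟩
    rw [hint] at this
    simpa [Function.comp_def] using this
  obtain ⟨N, hN⟩ := (ENNReal.tendsto_atTop_zero.mp key) ε hε
  have hev : ∀ᶠ m in atTop, a m < t + 1/(N+1) := by
    apply Tendsto.eventually_lt_const _ h
    have : (0:ℝ) < 1/(N+1) := by positivity
    linarith
  obtain ⟨M, hM⟩ := eventually_atTop.mp hev
  exact ⟨M, fun m hm => le_trans (measure_mono (Set.Ioc_subset_Ioc le_rfl (hM m hm).le)) (hN N le_rfl)⟩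

lemma tendsto_meas_Ico {ω : Measure ℝ} [IsFiniteMeasure ω] {a : ℕ → ℝ} {t : ℝ}
    (h : Tendsto a atTop (𝓝 t)) :
    Tendsto (fun m => ω (Set.Ico (a m) t)) atTop (𝓝 0) := by
  rw [ENNReal.tendsto_atTop_zero]
  intro ε hε
  have hseq : Tendsto (fun n : ℕ => t - 1/(n+1)) atTop (𝓝 t) := by
    have := tendsto_one_div_add_atTop_nhds_zero_nat (𝕜 := ℝ)
    simpa using (tendsto_const_nhds (x := t)).sub this
  have key : Tendsto (fun n : ℕ => ω (Set.Ico (t - 1/(n+1)) t)) atTop (𝓝 0) := by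
    have hanti : Antitone (fun n : ℕ => Set.Ico (t - 1/(n+1)) t) := by
      intro m n hmn
      apply Set.Ico_subset_Ico _ le_rfl
      have : (1:ℝ)/(n+1) ≤ 1/(m+1) := by
        apply one_div_le_one_div_of_le (by positivity)
        exact_mod_cast by omega
      linarith
    have hint : (⋂ n : ℕ, Set.Ico (t - 1/(n+1)) t) = ∅ := by
      ext x
      simp only [Set.mem_iInter, Set.mem_Ico, Set.mem_empty_iff_false, iff_false, not_forall]
      by_contra hcon
      push_neg at hcon
      have hx1 : x < t := (hcon 0).2
      have hx2 : t ≤ x := le_of_tendsto' hseq (fun n => (hcon n).1)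
      linarith
    have := tendsto_measure_iInter_atTop (μ := ω)
      (fun n => measurableSet_Ico.nullMeasurableSet)
      hanti ⟨0, measure_ne_top ω _⟩
    rw [hint] at this
    simpa [Function.comp_def] using this
  obtain ⟨N, hN⟩ := (ENNReal.tendsto_atTop_zero.mp key) ε hε
  have hev : ∀ᶠ m in atTop, t - 1/(N+1) < a m := by
    apply Tendsto.eventually_const_lt _ h
    have : (0:ℝ) < 1/(N+1) := by positivity
    linarith
  obtain ⟨M, hM⟩ := eventually_atTop.mp hev
  exact ⟨M, fun m hm => le_trans (measure_mono (Set.Ico_subset_Ico (hM m hm).le le_rfl)) (hN N le_rfl)⟩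

lemma squeeze_zero' {f g : ℕ → ℝ≥0∞} (hfg : ∀ m, f m ≤ g m)
    (hg : Tendsto g atTop (𝓝 0)) : Tendsto f atTop (𝓝 0) :=
  tendsto_of_tendsto_of_tendsto_of_le_of_le tendsto_const_nhds hg
    (fun m => zero_le) hfg

lemma freq_le_limit {a : ℕ → ℝ} {t x : ℝ} (h : Tendsto a atTop (𝓝 t))
    (hf : ∃ᶠ m in atTop, a m ≤ x) : t ≤ x := by
  obtain ⟨φ, hφ, hx⟩ := extraction_of_frequently_atTop hf
  exact le_of_tendsto' (h.comp hφ.tendsto_atTop) hx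

lemma freq_ge_limit {a : ℕ → ℝ} {t x : ℝ} (h : Tendsto a atTop (𝓝 t))
    (hf : ∃ᶠ m in atTop, x ≤ a m) : x ≤ t := by
  obtain ⟨φ, hφ, hx⟩ := extraction_of_frequently_atTop hf
  exact ge_of_tendsto' (h.comp hφ.tendsto_atTop) hx

def SpecL (ω : Measure ℝ) (a : ℕ → ℝ) (t : ℝ) (lb : Bool) (L : Set ℝ) : Prop :=
  Tendsto (fun m => ω ((halfL lb (a m)) ∆ L)) atTop (𝓝 0) ∧
  (L = Set.Ici t ∨ L = Set.Ioi t) ∧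
  (L = Set.Ici t → (∀ m, a m < t) ∨ ((∀ m, a m = t) ∧ lb = true)) ∧
  (∀ x, (∃ᶠ m in atTop, x ∈ halfL lb (a m)) → x ∈ L)

def SpecR (ω : Measure ℝ) (b : ℕ → ℝ) (t : ℝ) (rb : Bool) (R : Set ℝ) : Prop :=
  Tendsto (fun m => ω ((halfR rb (b m)) ∆ R)) atTop (𝓝 0) ∧
  (R = Set.Iic t ∨ R = Set.Iio t) ∧
  (R = Set.Iic t → (∀ m, t < b m) ∨ ((∀ m, b m = t) ∧ rb = true)) ∧
  (∀ x, (∃ᶠ m in atTop, x ∈ halfR rb (b m)) → x ∈ R)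

open Classical in
def limL (a : ℕ → ℝ) (t : ℝ) (lb : Bool) : Set ℝ :=
  if ∀ m, a m = t then halfL lb t else if ∀ m, a m < t then Set.Ici t else Set.Ioi t

open Classical in
def limR (b : ℕ → ℝ) (t : ℝ) (rb : Bool) : Set ℝ :=
  if ∀ m, b m = t then halfR rb t else if ∀ m, b m < t then Set.Iio t else Set.Iic t

lemma specL_limL (ω : Measure ℝ) [IsFiniteMeasure ω] {a : ℕ → ℝ} {t : ℝ}
    (h : Tendsto a atTop (𝓝 t))
    (tri : (∀ m, a m = t) ∨ (∀ m, a m < t) ∨ (∀ m, t < a m)) (lb : Bool) :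
    SpecL ω a t lb (limL a t lb) := by
  rcases tri with hc | hlt | hgt
  · have hLeq : limL a t lb = halfL lb t := by rw [limL, if_pos hc]
    rw [hLeq]
    refine ⟨?_, ?_, ?_, ?_⟩
    · have : ∀ m, (halfL lb (a m)) ∆ (halfL lb t) = ∅ := by
        intro m; rw [hc m]; simp [symmDiff_self]
      simp only [this]
      simpa using tendsto_const_nhds
    · cases lb <;> simp [halfL]
    · intro hL
      right
      refine ⟨hc, ?_⟩
      cases lb with
      | true => rfl
      | false =>
        exfalso
        have h2 : Set.Ioi t = Set.Ici t := by simpa [halfL] using hL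
        have : t ∈ Set.Ioi t := h2 ▸ Set.self_mem_Ici
        exact lt_irrefl t this
    · intro x hx
      obtain ⟨m, hm⟩ := hx.exists
      rwa [hc m] at hm
  · have h1 : ¬ ∀ m, a m = t := fun h' => absurd (h' 0) (ne_of_lt (hlt 0))
    have hLeq : limL a t lb = Set.Ici t := by rw [limL, if_neg h1, if_pos hlt]
    rw [hLeq]
    refine ⟨?_, Or.inl rfl, fun _ => Or.inl hlt, ?_⟩
    · apply squeeze_zero' (g := fun m => ω (Set.Ico (a m) t)) _ (tendsto_meas_Ico h)
      intro m
      apply measure_mono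
      intro x hx
      rcases Set.mem_symmDiff.mp hx with ⟨hx1, hx2⟩ | ⟨hx1, hx2⟩
      · refine ⟨halfL_subset_Ici hx1, lt_of_not_ge hx2⟩
      · exfalso
        apply hx2
        have : a m < x := lt_of_lt_of_le (hlt m) hx1
        cases lb <;> simp [halfL] <;> [exact this; exact this.le]
    · intro x hx
      exact freq_le_limit h (hx.mono (fun m hm => halfL_subset_Ici hm))
  · have h1 : ¬ ∀ m, a m = t := fun h' => absurd (h' 0) (ne_of_gt (hgt 0))
    have h2 : ¬ ∀ m, a m < t := fun h' => absurd (h' 0) (not_lt.mpr (hgt 0).le)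
    have hLeq : limL a t lb = Set.Ioi t := by rw [limL, if_neg h1, if_neg h2]
    rw [hLeq]
    refine ⟨?_, Or.inr rfl, ?_, ?_⟩
    · apply squeeze_zero' (g := fun m => ω (Set.Ioc t (a m))) _ (tendsto_meas_Ioc h)
      intro m
      apply measure_mono
      intro x hx
      rcases Set.mem_symmDiff.mp hx with ⟨hx1, hx2⟩ | ⟨hx1, hx2⟩
      · exfalso
        exact hx2 (lt_of_lt_of_le (hgt m) (halfL_subset_Ici hx1))
      · refine ⟨hx1, ?_⟩
        by_contra hcon
        push_neg at hcon
        apply hx2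
        cases lb <;> simp [halfL] <;> [exact hcon; exact hcon.le]
    · intro hL
      exfalso
      have : t ∈ Set.Ioi t := hL ▸ Set.self_mem_Ici
      exact lt_irrefl t this
    · intro x hx
      obtain ⟨m, hm⟩ := hx.exists
      exact lt_of_lt_of_le (hgt m) (halfL_subset_Ici hm)

lemma specR_limR (ω : Measure ℝ) [IsFiniteMeasure ω] {b : ℕ → ℝ} {t : ℝ}
    (h : Tendsto b atTop (𝓝 t))
    (tri : (∀ m, b m = t) ∨ (∀ m, b m < t) ∨ (∀ m, t < b m)) (rb : Bool) :
    SpecR ω b t rb (limR b t rb) := by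
  rcases tri with hc | hlt | hgt
  · have hLeq : limR b t rb = halfR rb t := by rw [limR, if_pos hc]
    rw [hLeq]
    refine ⟨?_, ?_, ?_, ?_⟩
    · have : ∀ m, (halfR rb (b m)) ∆ (halfR rb t) = ∅ := by
        intro m; rw [hc m]; simp [symmDiff_self]
      simp only [this]
      simpa using tendsto_const_nhds
    · cases rb <;> simp [halfR]
    · intro hR
      right
      refine ⟨hc, ?_⟩
      cases rb with
      | true => rfl
      | false =>
        exfalso
        have h2 : Set.Iio t = Set.Iic t := by simpa [halfR] using hR
        have : t ∈ Set.Iio t := h2 ▸ Set.self_mem_Iic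
        exact lt_irrefl t this
    · intro x hx
      obtain ⟨m, hm⟩ := hx.exists
      rwa [hc m] at hm
  · have h1 : ¬ ∀ m, b m = t := fun h' => absurd (h' 0) (ne_of_lt (hlt 0))
    have hLeq : limR b t rb = Set.Iio t := by rw [limR, if_neg h1, if_pos hlt]
    rw [hLeq]
    refine ⟨?_, Or.inr rfl, ?_, ?_⟩
    · apply squeeze_zero' (g := fun m => ω (Set.Ico (b m) t)) _ (tendsto_meas_Ico h)
      intro m
      apply measure_mono
      intro x hx
      rcases Set.mem_symmDiff.mp hx with ⟨hx1, hx2⟩ | ⟨hx1, hx2⟩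
      · exfalso
        exact hx2 (lt_of_le_of_lt (halfR_subset_Iic hx1) (hlt m))
      · refine ⟨?_, hx1⟩
        by_contra hcon
        push_neg at hcon
        apply hx2
        cases rb <;> simp [halfR] <;> [exact hcon; exact hcon.le]
    · intro hR
      exfalso
      have : t ∈ Set.Iio t := hR ▸ Set.self_mem_Iic
      exact lt_irrefl t this
    · intro x hx
      obtain ⟨m, hm⟩ := hx.exists
      exact lt_of_le_of_lt (halfR_subset_Iic hm) (hlt m)
  · have h1 : ¬ ∀ m, b m = t := fun h' => absurd (h' 0) (ne_of_gt (hgt 0))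
    have h2 : ¬ ∀ m, b m < t := fun h' => absurd (h' 0) (not_lt.mpr (hgt 0).le)
    have hLeq : limR b t rb = Set.Iic t := by rw [limR, if_neg h1, if_neg h2]
    rw [hLeq]
    refine ⟨?_, Or.inl rfl, fun _ => Or.inl hgt, ?_⟩
    · apply squeeze_zero' (g := fun m => ω (Set.Ioc t (b m))) _ (tendsto_meas_Ioc h)
      intro m
      apply measure_mono
      intro x hx
      rcases Set.mem_symmDiff.mp hx with ⟨hx1, hx2⟩ | ⟨hx1, hx2⟩
      · exact ⟨lt_of_not_ge hx2, halfR_subset_Iic hx1⟩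
      · exfalso
        apply hx2
        have : x < b m := lt_of_le_of_lt hx1 (hgt m)
        cases rb <;> simp [halfR] <;> [exact this; exact this.le]
    · intro x hx
      exact freq_ge_limit h (hx.mono (fun m hm => halfR_subset_Iic hm))

lemma limL_shape (a : ℕ → ℝ) (t : ℝ) (lb : Bool) :
    (limL a t lb).OrdConnected := by
  rw [limL]
  split
  · cases lb <;> simp only [halfL, if_true, if_false, Bool.false_eq_true, ite_false, ite_true]
    · exact Set.ordConnected_Ioi
    · exact Set.ordConnected_Ici
  · split
    · exact Set.ordConnected_Ici
    · exact Set.ordConnected_Ioi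

lemma limR_shape (b : ℕ → ℝ) (t : ℝ) (rb : Bool) :
    (limR b t rb).OrdConnected := by
  rw [limR]
  split
  · cases rb <;> simp only [halfR, if_true, if_false, Bool.false_eq_true, ite_false, ite_true]
    · exact Set.ordConnected_Iio
    · exact Set.ordConnected_Iic
  · split
    · exact Set.ordConnected_Iio
    · exact Set.ordConnected_Iic

def touches (E : Set ℝ) (x : ℝ) : Prop := ∃ y ∈ E, y ≤ x

lemma touches_mono {E : Set ℝ} {x z : ℝ} (hxz : x ≤ z) (h : touches E x) : touches E z := by
  obtain ⟨y, hy, hyx⟩ := h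
  exact ⟨y, hy, hyx.trans hxz⟩

def mergedSet (P : Finset (Set ℝ)) (Emin E : Set ℝ) : Set ℝ :=
  {x | x ∈ Set.Icc (0:ℝ) 1 ∧
    ((touches E x ∧ ∀ E' ∈ P, touches E' x → tauKey E' ≤ tauKey E) ∨
     ((∀ E' ∈ P, ¬ touches E' x) ∧ E = Emin))}

section Merge
variable {P : Finset (Set ℝ)} {Emin : Set ℝ}
variable (hP : ∀ E ∈ P, E.Nonempty ∧ E.OrdConnected ∧ E ⊆ Set.Icc (0:ℝ) 1)
variable (hdisj : ∀ E ∈ P, ∀ E' ∈ P, E ≠ E' → Disjoint E E')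

include hP hdisj

lemma tau_lt_or {E E' : Set ℝ} (hE : E ∈ P) (hE' : E' ∈ P) (hne : E ≠ E') :
    ((∀ x ∈ E, ∀ y ∈ E', x < y) ∧ tauKey E < tauKey E') ∨
    ((∀ x ∈ E', ∀ y ∈ E, x < y) ∧ tauKey E' < tauKey E) := by
  obtain ⟨h1, h2, h3⟩ := hP E hE
  obtain ⟨h1', h2', h3'⟩ := hP E' hE'
  rcases plt_trichotomy h2 h2' (hdisj E hE E' hE' hne) h1 h1' with h | h
  · exact Or.inl ⟨h, tauKey_lt h1 h1' h3 h3' h⟩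
  · exact Or.inr ⟨h, tauKey_lt h1' h1 h3' h3 h⟩

lemma mem_merged_self {E : Set ℝ} (hE : E ∈ P) : E ⊆ mergedSet P Emin E := by
  intro x hx
  refine ⟨(hP E hE).2.2 hx, Or.inl ⟨⟨x, hx, le_rfl⟩, ?_⟩⟩
  intro E' hE' htch
  by_cases heq : E' = E
  · subst heq; exact le_rfl
  rcases tau_lt_or hP hdisj hE' hE heq with ⟨_, hlt⟩ | ⟨hplt, _⟩
  · exact hlt.le
  · exfalso
    obtain ⟨y, hy, hyx⟩ := htch
    exact absurd hyx (not_le.mpr (hplt x hx y hy))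

lemma merged_disjoint {E E' : Set ℝ} (hE : E ∈ P) (hE' : E' ∈ P) (hne : E ≠ E') :
    mergedSet P Emin E ∩ mergedSet P Emin E' = ∅ := by
  ext x
  simp only [Set.mem_inter_iff, Set.mem_empty_iff_false, iff_false, not_and]
  rintro ⟨_, h1⟩ ⟨_, h2⟩
  rcases h1 with ⟨ht1, hm1⟩ | ⟨hn1, he1⟩
  · rcases h2 with ⟨ht2, hm2⟩ | ⟨hn2, _⟩
    · have l1 := hm1 E' hE' ht2
      have l2 := hm2 E hE ht1
      have : tauKey E = tauKey E' := le_antisymm l2 l1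
      rcases tau_lt_or hP hdisj hE hE' hne with ⟨_, hlt⟩ | ⟨_, hlt⟩ <;>
        exact absurd this (by rw [this] at hlt ⊢; exact fun h => lt_irrefl _ hlt)
    · exact hn2 E hE ht1
  · rcases h2 with ⟨ht2, _⟩ | ⟨_, he2⟩
    · exact hn1 E' hE' ht2
    · exact hne (he1.trans he2.symm)

lemma merged_cover (hPne : P.Nonempty) (hEmin : Emin ∈ P) {x : ℝ}
    (hx : x ∈ Set.Icc (0:ℝ) 1) : ∃ E ∈ P, x ∈ mergedSet P Emin E := by
  classical
  by_cases hex : ∃ E ∈ P, touches E x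
  · obtain ⟨E₀, hE₀⟩ := hex
    have hfne : (P.filter (fun E => touches E x)).Nonempty :=
      ⟨E₀, Finset.mem_filter.mpr ⟨hE₀.1, hE₀.2⟩⟩
    obtain ⟨E, hEf, hEmax⟩ := Finset.exists_max_image _ tauKey hfne
    rw [Finset.mem_filter] at hEf
    refine ⟨E, hEf.1, hx, Or.inl ⟨hEf.2, ?_⟩⟩
    intro E' hE' ht'
    exact hEmax E' (Finset.mem_filter.mpr ⟨hE', ht'⟩)
  · push_neg at hex
    exact ⟨Emin, hEmin, hx, Or.inr ⟨hex, rfl⟩⟩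

lemma merged_ordConnected (hEmin : Emin ∈ P)
    (hminP : ∀ E ∈ P, tauKey Emin ≤ tauKey E) {E : Set ℝ} (hE : E ∈ P) :
    (mergedSet P Emin E).OrdConnected := by
  constructor
  rintro x ⟨hxI, hx⟩ y ⟨hyI, hy⟩ z ⟨hxz, hzy⟩
  have hzI : z ∈ Set.Icc (0:ℝ) 1 := ⟨hxI.1.trans hxz, hzy.trans hyI.2⟩
  refine ⟨hzI, ?_⟩
  rcases hy with ⟨hty, hmy⟩ | ⟨hny, hemin⟩
  · -- y via max clause
    rcases hx with ⟨htx, _⟩ | ⟨hnx, hemin⟩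
    · -- x touches E too
      exact Or.inl ⟨touches_mono hxz htx,
        fun E' hE' ht' => hmy E' hE' (touches_mono hzy ht')⟩
    · -- x in fallback, E = Emin
      subst hemin
      by_cases hez : ∃ E' ∈ P, touches E' z
      · obtain ⟨E', hE', ht'⟩ := hez
        have hle : tauKey E' ≤ tauKey E := hmy E' hE' (touches_mono hzy ht')
        have hge : tauKey E ≤ tauKey E' := hminP E' hE'
        have heq : E' = E := by
          by_contra hne
          rcases tau_lt_or hP hdisj hE' hEmin hne with ⟨_, hlt⟩ | ⟨_, hlt⟩
          · exact absurd hge (not_le.mpr hlt)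
          · exact absurd hle (not_le.mpr hlt)
        subst heq
        refine Or.inl ⟨ht', ?_⟩
        intro E'' hE'' ht''
        exact hmy E'' hE'' (touches_mono hzy ht'')
      · push_neg at hez
        exact Or.inr ⟨hez, rfl⟩
  · -- y in fallback: then z also in fallback
    refine Or.inr ⟨?_, hemin⟩
    intro E' hE' ht'
    exact hny E' hE' (touches_mono hzy ht')

end Merge

lemma symmDiff_biUnion {ι α : Type*} (s : Finset ι) (A B : ι → Set α) :
    ((⋃ i ∈ s, A i) ∆ (⋃ i ∈ s, B i)) ⊆ ⋃ i ∈ s, (A i ∆ B i) := by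
  intro x hx
  rcases Set.mem_symmDiff.mp hx with ⟨hx1, hx2⟩ | ⟨hx1, hx2⟩ <;>
  · simp only [Set.mem_iUnion] at hx1 hx2 ⊢
    push_neg at hx2
    obtain ⟨i, hi, hxi⟩ := hx1
    exact ⟨i, hi, Set.mem_symmDiff.mpr (by first
      | exact Or.inl ⟨hxi, hx2 i hi⟩
      | exact Or.inr ⟨hxi, hx2 i hi⟩)⟩

lemma meas_symmDiff_biUnion {α : Type*} [MeasurableSpace α] (μ : Measure α)
    {ι : Type*} (s : Finset ι) (A B : ι → Set α) :
    μ ((⋃ i ∈ s, A i) ∆ (⋃ i ∈ s, B i)) ≤ ∑ i ∈ s, μ (A i ∆ B i) :=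
  le_trans (measure_mono (symmDiff_biUnion s A B)) (measure_biUnion_finset_le s _)

lemma meas_symmDiff_triangle {α : Type*} [MeasurableSpace α] (μ : Measure α)
    (A B C : Set α) : μ (A ∆ C) ≤ μ (A ∆ B) + μ (B ∆ C) :=
  le_trans (measure_mono (symmDiff_triangle A B C)) (measure_union_le _ _)

lemma inter_symmDiff_subset {C Pl Pr L R : Set ℝ}
    (hC : C = Pl ∩ Pr) (hsub : C ⊆ Set.Icc (0:ℝ) 1) :
    (C ∆ (Set.Icc (0:ℝ) 1 ∩ (L ∩ R))) ⊆ (Pl ∆ L) ∪ (Pr ∆ R) := by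
  subst hC
  intro x hx
  rcases Set.mem_symmDiff.mp hx with ⟨hx1, hx2⟩ | ⟨hx1, hx2⟩
  · have hxI : x ∈ Set.Icc (0:ℝ) 1 := hsub hx1
    by_cases hL : x ∈ L
    · by_cases hR : x ∈ R
      · exact absurd ⟨hxI, hL, hR⟩ hx2
      · exact Or.inr (Set.mem_symmDiff.mpr (Or.inl ⟨hx1.2, hR⟩))
    · exact Or.inl (Set.mem_symmDiff.mpr (Or.inl ⟨hx1.1, hL⟩))
  · obtain ⟨hxI, hL, hR⟩ := hx1
    by_cases hPl : x ∈ Pl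
    · have hPr : x ∉ Pr := fun h => hx2 ⟨hPl, h⟩
      exact Or.inr (Set.mem_symmDiff.mpr (Or.inr ⟨hR, hPr⟩))
    · exact Or.inl (Set.mem_symmDiff.mpr (Or.inr ⟨hL, hPl⟩))

lemma extract_const {β : Type*} [Finite β] (f : ℕ → β) :
    ∃ (φ : ℕ → ℕ) (b : β), StrictMono φ ∧ ∀ m, f (φ m) = b := by
  obtain ⟨b, hb⟩ := Finite.exists_infinite_fiber f
  have : ∃ᶠ m in atTop, f m = b := by
    rw [Nat.frequently_atTop_iff_infinite]
    rw [← Set.infinite_coe_iff]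
    exact hb
  obtain ⟨φ, hφ, h⟩ := extraction_of_frequently_atTop this
  exact ⟨φ, b, hφ, h⟩

lemma finset_enum {α : Type*} {s : Finset α} {k : ℕ} (hne : s.Nonempty) (hk : s.card ≤ k) :
    ∃ g : Fin k → α, (∀ i, g i ∈ s) ∧ ∀ x ∈ s, ∃ i, g i = x := by
  classical
  have hpos : 0 < s.card := Finset.card_pos.mpr hne
  set e := s.equivFin
  refine ⟨fun i => if h : (i : ℕ) < s.card then (e.symm ⟨i, h⟩ : α) else (e.symm ⟨0, hpos⟩ : α),
    ?_, ?_⟩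
  · intro i
    by_cases h : (i : ℕ) < s.card
    · simp only [dif_pos h]; exact (e.symm _).2
    · simp only [dif_neg h]; exact (e.symm _).2
  · intro x hx
    refine ⟨⟨(e ⟨x, hx⟩ : Fin s.card), lt_of_lt_of_le (e ⟨x, hx⟩).2 hk⟩, ?_⟩
    have h : ((e ⟨x, hx⟩ : Fin s.card) : ℕ) < s.card := (e ⟨x, hx⟩).2
    simp only [dif_pos h, Fin.eta, Equiv.symm_apply_apply]

lemma extract_tri_one {a : ℕ → ℝ} (hb : ∀ m, a m ∈ Set.Icc (0:ℝ) 1) :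
    ∃ (φ : ℕ → ℕ) (t : ℝ), StrictMono φ ∧ Tendsto (fun m => a (φ m)) atTop (𝓝 t) ∧
      ((∀ m, a (φ m) = t) ∨ (∀ m, a (φ m) < t) ∨ (∀ m, t < a (φ m))) := by
  obtain ⟨t, _, φ₁, hφ₁, hten⟩ := isCompact_Icc.tendsto_subseq hb
  have htri : ∃ᶠ m in atTop,
      (a (φ₁ m) = t ∨ a (φ₁ m) < t ∨ t < a (φ₁ m)) :=
    Filter.Frequently.of_forall (fun m => by rcases lt_trichotomy (a (φ₁ m)) t with h|h|h
                                             · exact Or.inr (Or.inl h)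
                                             · exact Or.inl h
                                             · exact Or.inr (Or.inr h))
  rw [Filter.frequently_or_distrib] at htri
  rcases htri with h1 | h2
  · obtain ⟨φ₂, hφ₂, hp⟩ := extraction_of_frequently_atTop h1
    exact ⟨φ₁ ∘ φ₂, t, hφ₁.comp hφ₂, hten.comp hφ₂.tendsto_atTop, Or.inl hp⟩
  · rw [Filter.frequently_or_distrib] at h2
    rcases h2 with h2 | h3
    · obtain ⟨φ₂, hφ₂, hp⟩ := extraction_of_frequently_atTop h2
      exact ⟨φ₁ ∘ φ₂, t, hφ₁.comp hφ₂, hten.comp hφ₂.tendsto_atTop, Or.inr (Or.inl hp)⟩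
    · obtain ⟨φ₂, hφ₂, hp⟩ := extraction_of_frequently_atTop h3
      exact ⟨φ₁ ∘ φ₂, t, hφ₁.comp hφ₂, hten.comp hφ₂.tendsto_atTop, Or.inr (Or.inr hp)⟩

lemma extract_tri (N : ℕ) (u : ℕ → Fin N → ℝ) (hb : ∀ m i, u m i ∈ Set.Icc (0:ℝ) 1) :
    ∃ (φ : ℕ → ℕ) (t : Fin N → ℝ), StrictMono φ ∧
      ∀ i, Tendsto (fun m => u (φ m) i) atTop (𝓝 (t i)) ∧
        ((∀ m, u (φ m) i = t i) ∨ (∀ m, u (φ m) i < t i) ∨ (∀ m, t i < u (φ m) i)) := by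
  induction N with
  | zero => exact ⟨id, fun i => i.elim0, strictMono_id, fun i => i.elim0⟩
  | succ N ih =>
    obtain ⟨φ₁, t₁, hφ₁, h₁⟩ := ih (fun m i => u m i.castSucc) (fun m i => hb m _)
    obtain ⟨φ₂, t₂, hφ₂, hten₂, htri₂⟩ :=
      extract_tri_one (a := fun m => u (φ₁ m) (Fin.last N)) (fun m => hb _ _)
    refine ⟨φ₁ ∘ φ₂, Fin.lastCases t₂ t₁, hφ₁.comp hφ₂, ?_⟩
    intro i
    refine Fin.lastCases ?_ ?_ i
    · simpa using ⟨hten₂, htri₂⟩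
    · intro j
      obtain ⟨hten, htri⟩ := h₁ j
      constructor
      · simpa [Function.comp_def] using hten.comp hφ₂.tendsto_atTop
      · simp only [Fin.lastCases_castSucc]
        rcases htri with h | h | h
        · exact Or.inl (fun m => h (φ₂ m))
        · exact Or.inr (Or.inl (fun m => h (φ₂ m)))
        · exact Or.inr (Or.inr (fun m => h (φ₂ m)))

lemma decide_iff {p : Prop} {inst : Decidable p} {b : Bool} (h : @decide p inst = b) :
    p ↔ b = true := by
  subst h
  cases inst with
  | isTrue hp => simp [hp]
  | isFalse hp => simp [hp]


end CCaux

open Filter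

/-- A classification: a finite partition of `[0,1]` into intervals of positive measure. -/
structure Classification (ω : Measure ℝ) where
  parts : Finset (Set ℝ)
  isInterval : ∀ C ∈ parts, C.OrdConnected
  posMeas : ∀ C ∈ parts, 0 < ω C
  pairwiseDisj : (parts : Set (Set ℝ)).PairwiseDisjoint id
  cover : ⋃₀ (parts : Set (Set ℝ)) = Set.Icc (0 : ℝ) 1

/-- The (finite) algebra of subsets generated by a classification. -/
def sigmaAlg {ω : Measure ℝ} (π : Classification ω) : Set (Set ℝ) :=
  {B | ∃ S : Finset (Set ℝ), S ⊆ π.parts ∧ B = ⋃₀ (S : Set (Set ℝ))}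

/-- `δ_ω(π,π') = sup_{C ∈ σ(π)} inf_{C' ∈ σ(π')} ω (C △ C')`. -/
def deltaOmega (ω : Measure ℝ) (π π' : Classification ω) : ℝ≥0∞ :=
  ⨆ C ∈ sigmaAlg π, ⨅ C' ∈ sigmaAlg π', ω (C ∆ C')

/-- The pseudometric `d_ω`. -/
def dOmega (ω : Measure ℝ) (π π' : Classification ω) : ℝ≥0∞ :=
  max (deltaOmega ω π π') (deltaOmega ω π' π)

open CCaux

/-- the pseudometric space (Π_{≤k}, d_ω) is compact: every sequence of
classifications with at most k intervals has a subsequence converging in d_ω to some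
classification with at most k intervals. -/
theorem classifications_compact (ω : Measure ℝ) [IsProbabilityMeasure ω]
    (hω : ω (Set.Icc (0 : ℝ) 1) = 1) (k : ℕ)
    (π : ℕ → Classification ω) (hπ : ∀ m, (π m).parts.card ≤ k) :
    ∃ φ : ℕ → ℕ, StrictMono φ ∧
      ∃ ρ : Classification ω, ρ.parts.card ≤ k ∧
        Filter.Tendsto (fun m => dOmega ω (π (φ m)) ρ) Filter.atTop (nhds 0) := by
  classical
  have hIcc0 : (0:ℝ) ∈ Set.Icc (0:ℝ) 1 := by norm_num
  -- basic facts about parts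
  have hpartsne : ∀ m, (π m).parts.Nonempty := by
    intro m
    rcases Finset.eq_empty_or_nonempty (π m).parts with h | h
    · exfalso
      have hc := (π m).cover
      rw [h] at hc
      simp only [Finset.coe_empty, Set.sUnion_empty] at hc
      have h0 : (0:ℝ) ∈ (∅ : Set ℝ) := by rw [hc]; exact hIcc0
      simpa using h0
    · exact h
  have hsub : ∀ m, ∀ C ∈ (π m).parts, C ⊆ Set.Icc (0:ℝ) 1 := by
    intro m C hC
    rw [← (π m).cover]
    exact Set.subset_sUnion_of_mem (Finset.mem_coe.mpr hC)
  have hCne : ∀ m, ∀ C ∈ (π m).parts, C.Nonempty := fun m C hC =>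
    nonempty_of_measure_ne_zero (ne_of_gt ((π m).posMeas C hC))
  -- enumeration of parts by Fin k
  have henum : ∀ m, ∃ g : Fin k → Set ℝ,
      (∀ i, g i ∈ (π m).parts) ∧ ∀ C ∈ (π m).parts, ∃ i, g i = C :=
    fun m => finset_enum (hpartsne m) (hπ m)
  choose c hc1 hc2 using henum
  have hbdA : ∀ m i, sInf (c m i) ∈ Set.Icc (0:ℝ) 1 := by
    intro m i
    have hne := hCne m _ (hc1 m i)
    have hs := hsub m _ (hc1 m i)
    obtain ⟨x, hx⟩ := hne
    constructor
    · exact le_csInf ⟨x, hx⟩ (fun y hy => (hs hy).1)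
    · exact le_trans (csInf_le ⟨0, fun y hy => (hs hy).1⟩ hx) (hs hx).2
  have hbdB : ∀ m i, sSup (c m i) ∈ Set.Icc (0:ℝ) 1 := by
    intro m i
    have hne := hCne m _ (hc1 m i)
    have hs := hsub m _ (hc1 m i)
    obtain ⟨x, hx⟩ := hne
    constructor
    · exact le_trans (hs hx).1 (le_csSup ⟨1, fun y hy => (hs hy).2⟩ hx)
    · exact csSup_le ⟨x, hx⟩ (fun y hy => (hs hy).2)
  -- extraction 1 : convergence of infima
  obtain ⟨φ₁, ta, hφ₁, h₁⟩ := extract_tri k (fun m i => sInf (c m i)) (fun m i => hbdA m i)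
  -- extraction 2 : convergence of suprema
  obtain ⟨φ₂, tb, hφ₂, h₂⟩ :=
    extract_tri k (fun m i => sSup (c (φ₁ m) i)) (fun m i => hbdB (φ₁ m) i)
  -- extraction 3 : constancy of boundary bits and of the order pattern
  obtain ⟨φ₃, v, hφ₃, h₃⟩ := extract_const (fun m =>
    ((fun i => decide (sInf (c (φ₁ (φ₂ m)) i) ∈ c (φ₁ (φ₂ m)) i),
      fun i => decide (sSup (c (φ₁ (φ₂ m)) i) ∈ c (φ₁ (φ₂ m)) i),
      fun i j => decide (∀ x ∈ c (φ₁ (φ₂ m)) i, ∀ y ∈ c (φ₁ (φ₂ m)) j, x < y)) :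
      (Fin k → Bool) × (Fin k → Bool) × (Fin k → Fin k → Bool)))
  set Φ : ℕ → ℕ := fun m => φ₁ (φ₂ (φ₃ m)) with hΦ
  have hΦmono : StrictMono Φ := (hφ₁.comp hφ₂).comp hφ₃
  set d : ℕ → Fin k → Set ℝ := fun m i => c (Φ m) i with hd
  set lb : Fin k → Bool := v.1 with hlbdef
  set rb : Fin k → Bool := v.2.1 with hrbdef
  set pb : Fin k → Fin k → Bool := v.2.2 with hpbdef
  -- consolidated limit facts
  have hta : ∀ i, Tendsto (fun m => sInf (d m i)) atTop (𝓝 (ta i)) := by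
    intro i
    exact ((h₁ i).1).comp ((hφ₂.comp hφ₃).tendsto_atTop)
  have htb : ∀ i, Tendsto (fun m => sSup (d m i)) atTop (𝓝 (tb i)) := by
    intro i
    exact ((h₂ i).1).comp (hφ₃.tendsto_atTop)
  have htriA : ∀ i, (∀ m, sInf (d m i) = ta i) ∨ (∀ m, sInf (d m i) < ta i) ∨
      (∀ m, ta i < sInf (d m i)) := by
    intro i
    rcases (h₁ i).2 with h | h | h
    · exact Or.inl (fun m => h (φ₂ (φ₃ m)))
    · exact Or.inr (Or.inl (fun m => h (φ₂ (φ₃ m))))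
    · exact Or.inr (Or.inr (fun m => h (φ₂ (φ₃ m))))
  have htriB : ∀ i, (∀ m, sSup (d m i) = tb i) ∨ (∀ m, sSup (d m i) < tb i) ∨
      (∀ m, tb i < sSup (d m i)) := by
    intro i
    rcases (h₂ i).2 with h | h | h
    · exact Or.inl (fun m => h (φ₃ m))
    · exact Or.inr (Or.inl (fun m => h (φ₃ m)))
    · exact Or.inr (Or.inr (fun m => h (φ₃ m)))
  have hlb : ∀ m i, (sInf (d m i) ∈ d m i) ↔ lb i = true := by
    intro m i
    have := congrFun (congrArg Prod.fst (h₃ m)) i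
    exact decide_iff this
  have hrb : ∀ m i, (sSup (d m i) ∈ d m i) ↔ rb i = true := by
    intro m i
    have := congrFun (congrArg (fun p => p.2.1) (h₃ m)) i
    exact decide_iff this
  have hpb : ∀ m i j, (∀ x ∈ d m i, ∀ y ∈ d m j, x < y) ↔ pb i j = true := by
    intro m i j
    have := congrFun (congrFun (congrArg (fun p => p.2.2) (h₃ m)) i) j
    exact decide_iff this
  have hdmem : ∀ m i, d m i ∈ (π (Φ m)).parts := fun m i => hc1 (Φ m) i
  have hdsub : ∀ m i, d m i ⊆ Set.Icc (0:ℝ) 1 := fun m i => hsub (Φ m) _ (hdmem m i)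
  have hdne : ∀ m i, (d m i).Nonempty := fun m i => hCne (Φ m) _ (hdmem m i)
  have hdord : ∀ m i, (d m i).OrdConnected := fun m i => (π (Φ m)).isInterval _ (hdmem m i)
  -- representation of each part by half-lines
  have hrep : ∀ m i, d m i = halfL (lb i) (sInf (d m i)) ∩ halfR (rb i) (sSup (d m i)) := by
    intro m i
    exact ordConnected_eq_halfs (hdord m i) (hdne m i)
      ⟨0, fun y hy => (hdsub m i hy).1⟩ ⟨1, fun y hy => (hdsub m i hy).2⟩
      (hlb m i) (hrb m i)
  -- limit sets
  set L : Fin k → Set ℝ := fun i => limL (fun m => sInf (d m i)) (ta i) (lb i) with hLdef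
  set R : Fin k → Set ℝ := fun i => limR (fun m => sSup (d m i)) (tb i) (rb i) with hRdef
  have hLspec : ∀ i, SpecL ω (fun m => sInf (d m i)) (ta i) (lb i) (L i) :=
    fun i => specL_limL ω (hta i) (htriA i) (lb i)
  have hRspec : ∀ i, SpecR ω (fun m => sSup (d m i)) (tb i) (rb i) (R i) :=
    fun i => specR_limR ω (htb i) (htriB i) (rb i)
  set D : Fin k → Set ℝ := fun i => Set.Icc (0:ℝ) 1 ∩ (L i ∩ R i) with hDdef
  have hDsub : ∀ i, D i ⊆ Set.Icc (0:ℝ) 1 := fun i => Set.inter_subset_left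
  have hDord : ∀ i, (D i).OrdConnected :=
    fun i => Set.ordConnected_Icc.inter ((limL_shape _ _ _).inter (limR_shape _ _ _))
  -- convergence of each part to its limit set
  have hDtend : ∀ i, Tendsto (fun m => ω (d m i ∆ D i)) atTop (𝓝 0) := by
    intro i
    apply squeeze_zero' (g := fun m =>
      ω ((halfL (lb i) (sInf (d m i))) ∆ L i) + ω ((halfR (rb i) (sSup (d m i))) ∆ R i))
    · intro m
      refine le_trans (measure_mono (inter_symmDiff_subset (hrep m i) (hdsub m i))) ?_
      exact measure_union_le _ _
    · have := (hLspec i).1.add (hRspec i).1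
      simpa using this
  -- the limit sets cover [0,1]
  have hDcover : ∀ x ∈ Set.Icc (0:ℝ) 1, ∃ i, x ∈ D i := by
    intro x hx
    have hxall : ∀ m, ∃ i, x ∈ d m i := by
      intro m
      have hxU : x ∈ ⋃₀ ((π (Φ m)).parts : Set (Set ℝ)) := by
        rw [(π (Φ m)).cover]; exact hx
      obtain ⟨C, hC, hxC⟩ := hxU
      obtain ⟨i, hi⟩ := hc2 (Φ m) C (Finset.mem_coe.mp hC)
      refine ⟨i, ?_⟩
      have : d m i = C := hi
      rw [this]; exact hxC
    choose f hf using hxall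
    obtain ⟨φf, i, hφf, hfi⟩ := extract_const f
    have hfreq : ∃ᶠ m in atTop, x ∈ d m i := by
      rw [Filter.frequently_atTop]
      intro N
      refine ⟨φf N, hφf.le_apply, ?_⟩
      have := hf (φf N)
      rwa [hfi N] at this
    refine ⟨i, hx, ?_, ?_⟩
    · exact (hLspec i).2.2.2 x (hfreq.mono (fun m hm => by rw [hrep m i] at hm; exact hm.1))
    · exact (hRspec i).2.2.2 x (hfreq.mono (fun m hm => by rw [hrep m i] at hm; exact hm.2))
  -- disjointness of limit sets coming from pointwise-ordered parts
  have hkey : ∀ i j, (∀ m, ∀ x ∈ d m i, ∀ y ∈ d m j, x < y) → D i ∩ D j = ∅ := by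
    intro i j hplt
    have hBA : ∀ m, sSup (d m i) ≤ sInf (d m j) := fun m =>
      csSup_le (hdne m i) (fun x hx => le_csInf (hdne m j) (fun y hy => (hplt m x hx y hy).le))
    have htt : tb i ≤ ta j := le_of_tendsto_of_tendsto' (htb i) (hta j) hBA
    ext x
    simp only [Set.mem_inter_iff, Set.mem_empty_iff_false, iff_false, not_and]
    rintro ⟨hxI, hxL, hxR⟩ ⟨hxI', hxL', hxR'⟩
    have hx1 : x ≤ tb i := by
      rcases (hRspec i).2.1 with h | h <;> rw [h] at hxR
      · exact hxR
      · exact le_of_lt hxR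
    have hx2 : ta j ≤ x := by
      rcases (hLspec j).2.1 with h | h <;> rw [h] at hxL'
      · exact hxL'
      · exact le_of_lt hxL'
    have heq1 : tb i = ta j := le_antisymm htt (le_trans hx2 hx1)
    rcases (hRspec i).2.1 with hRi | hRi
    · rcases (hLspec j).2.1 with hLj | hLj
      · -- R i = Iic, L j = Ici
        rcases (hRspec i).2.2.1 hRi with hg | ⟨hcb, hrbt⟩
        · rcases (hLspec j).2.2.1 hLj with hl | ⟨hca, _⟩
          · have e1 := hg 0
            have e2 := hl 0
            have e3 := hBA 0
            linarith
          · have e1 := hg 0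
            have e2 := hca 0
            have e3 := hBA 0
            linarith
        · rcases (hLspec j).2.2.1 hLj with hl | ⟨hca, hlbt⟩
          · have e1 := hcb 0
            have e2 := hl 0
            have e3 := hBA 0
            linarith
          · have hmem1 : sSup (d 0 i) ∈ d 0 i := (hrb 0 i).mpr hrbt
            have hmem2 : sInf (d 0 j) ∈ d 0 j := (hlb 0 j).mpr hlbt
            have hlt := hplt 0 _ hmem1 _ hmem2
            have e1 : sSup (d 0 i) = tb i := hcb 0
            have e2 : sInf (d 0 j) = ta j := hca 0
            linarith
      · -- L j = Ioi
        rw [hLj] at hxL'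
        rw [hRi] at hxR
        have : (x:ℝ) ≤ tb i := hxR
        have h2 : ta j < x := hxL'
        linarith
    · -- R i = Iio
      rw [hRi] at hxR
      have : x < tb i := hxR
      linarith
  have hdisjcase : ∀ i j, (∀ m, d m i = d m j) ∨ (∀ m, ∀ x ∈ d m i, ∀ y ∈ d m j, x < y) ∨
      (∀ m, ∀ x ∈ d m j, ∀ y ∈ d m i, x < y) := by
    intro i j
    by_cases h1 : pb i j = true
    · exact Or.inr (Or.inl (fun m => (hpb m i j).mpr h1))
    · by_cases h2 : pb j i = true
      · exact Or.inr (Or.inr (fun m => (hpb m j i).mpr h2))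
      · left
        intro m
        by_contra hne
        have hdisj : Disjoint (d m i) (d m j) :=
          (π (Φ m)).pairwiseDisj (Finset.mem_coe.mpr (hdmem m i))
            (Finset.mem_coe.mpr (hdmem m j)) hne
        rcases plt_trichotomy (hdord m i) (hdord m j) hdisj (hdne m i) (hdne m j) with h | h
        · exact h1 ((hpb m i j).mp h)
        · exact h2 ((hpb m j i).mp h)
  -- equal data gives equal limit sets
  have hDeq : ∀ i j, (∀ m, d m i = d m j) → D i = D j := by
    intro i j h
    have hseqA : (fun m => sInf (d m i)) = (fun m => sInf (d m j)) :=
      funext (fun m => by rw [h m])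
    have hseqB : (fun m => sSup (d m i)) = (fun m => sSup (d m j)) :=
      funext (fun m => by rw [h m])
    have htaeq : ta i = ta j := by
      refine tendsto_nhds_unique ?_ (hta j)
      rw [← hseqA]; exact hta i
    have htbeq : tb i = tb j := by
      refine tendsto_nhds_unique ?_ (htb j)
      rw [← hseqB]; exact htb i
    have hlbeq : lb i = lb j := by
      have h1 := hlb 0 i
      rw [h 0] at h1
      exact Bool.eq_iff_iff.mpr (h1.symm.trans (hlb 0 j))
    have hrbeq : rb i = rb j := by
      have h1 := hrb 0 i
      rw [h 0] at h1
      exact Bool.eq_iff_iff.mpr (h1.symm.trans (hrb 0 j))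
    show Set.Icc (0:ℝ) 1 ∩ (L i ∩ R i) = Set.Icc (0:ℝ) 1 ∩ (L j ∩ R j)
    have hLeq : L i = L j := by
      show limL (fun m => sInf (d m i)) (ta i) (lb i) = limL (fun m => sInf (d m j)) (ta j) (lb j)
      rw [hseqA, htaeq, hlbeq]
    have hReq : R i = R j := by
      show limR (fun m => sSup (d m i)) (tb i) (rb i) = limR (fun m => sSup (d m j)) (tb j) (rb j)
      rw [hseqB, htbeq, hrbeq]
    rw [hLeq, hReq]
  -- the finset of positive limit parts
  set Pfin : Finset (Set ℝ) := (Finset.univ.image D).filter (fun E => 0 < ω E) with hPdef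
  have hPrep : ∀ E ∈ Pfin, ∃ i, D i = E := by
    intro E hE
    rw [hPdef] at hE
    obtain ⟨i, _, hi⟩ := Finset.mem_image.mp (Finset.mem_filter.mp hE).1
    exact ⟨i, hi⟩
  have hPpos : ∀ E ∈ Pfin, 0 < ω E := fun E hE => (Finset.mem_filter.mp hE).2
  have hPmemD : ∀ i, 0 < ω (D i) → D i ∈ Pfin := by
    intro i hpos
    rw [hPdef]
    exact Finset.mem_filter.mpr ⟨Finset.mem_image.mpr ⟨i, Finset.mem_univ i, rfl⟩, hpos⟩
  have hPfacts : ∀ E ∈ Pfin, E.Nonempty ∧ E.OrdConnected ∧ E ⊆ Set.Icc (0:ℝ) 1 := by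
    intro E hE
    obtain ⟨i, hi⟩ := hPrep E hE
    refine ⟨nonempty_of_measure_ne_zero (ne_of_gt (hPpos E hE)), ?_, ?_⟩
    · rw [← hi]; exact hDord i
    · rw [← hi]; exact hDsub i
  have hPdisj : ∀ E ∈ Pfin, ∀ E' ∈ Pfin, E ≠ E' → Disjoint E E' := by
    intro E hE E' hE' hne
    obtain ⟨i, hi⟩ := hPrep E hE
    obtain ⟨j, hj⟩ := hPrep E' hE'
    have hij : i ≠ j := by rintro rfl; exact hne (hi.symm.trans hj)
    rcases hdisjcase i j with h | h | h
    · exfalso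
      apply hne
      rw [← hi, ← hj]
      exact hDeq i j h
    · rw [← hi, ← hj]
      exact Set.disjoint_iff_inter_eq_empty.mpr (hkey i j h)
    · rw [← hi, ← hj]
      exact (Set.disjoint_iff_inter_eq_empty.mpr (hkey j i h)).symm
  have hPne : Pfin.Nonempty := by
    by_contra hPe
    rw [Finset.not_nonempty_iff_eq_empty] at hPe
    have hz : ∀ i, ω (D i) = 0 := by
      intro i
      by_contra hnz
      have : D i ∈ Pfin := hPmemD i (pos_iff_ne_zero.mpr hnz)
      rw [hPe] at this
      exact absurd this (Finset.notMem_empty _)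
    have hIccsub : Set.Icc (0:ℝ) 1 ⊆ ⋃ i ∈ (Finset.univ : Finset (Fin k)), D i := by
      intro x hx
      obtain ⟨i, hi⟩ := hDcover x hx
      exact Set.mem_biUnion (Finset.mem_univ i) hi
    have hcontra : (1:ℝ≥0∞) ≤ 0 := by
      calc (1:ℝ≥0∞) = ω (Set.Icc (0:ℝ) 1) := hω.symm
      _ ≤ ω (⋃ i ∈ (Finset.univ : Finset (Fin k)), D i) := measure_mono hIccsub
      _ ≤ ∑ i ∈ (Finset.univ : Finset (Fin k)), ω (D i) := measure_biUnion_finset_le _ _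
      _ = 0 := by simp [hz]
    simp at hcontra
  obtain ⟨Emin, hEminP, hminP⟩ := Finset.exists_min_image Pfin tauKey hPne
  set mrg : Set ℝ → Set ℝ := mergedSet Pfin Emin with hmrgdef
  have hmrgIcc : ∀ E, mrg E ⊆ Set.Icc (0:ℝ) 1 := fun E x hx => hx.1
  have hInt : ∀ C ∈ Pfin.image mrg, C.OrdConnected := by
    intro C hC
    obtain ⟨E, hE, rfl⟩ := Finset.mem_image.mp hC
    exact merged_ordConnected hPfacts hPdisj hEminP hminP hE
  have hPos : ∀ C ∈ Pfin.image mrg, 0 < ω C := by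
    intro C hC
    obtain ⟨E, hE, rfl⟩ := Finset.mem_image.mp hC
    exact lt_of_lt_of_le (hPpos E hE) (measure_mono (mem_merged_self hPfacts hPdisj hE))
  have hPD : ((Pfin.image mrg : Finset (Set ℝ)) : Set (Set ℝ)).PairwiseDisjoint id := by
    intro u hu v hv huv
    obtain ⟨E, hE, rfl⟩ := Finset.mem_image.mp (Finset.mem_coe.mp hu)
    obtain ⟨E', hE', rfl⟩ := Finset.mem_image.mp (Finset.mem_coe.mp hv)
    have hne : E ≠ E' := by rintro rfl; exact huv rfl
    exact Set.disjoint_iff_inter_eq_empty.mpr (merged_disjoint hPfacts hPdisj hE hE' hne)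
  have hCov : ⋃₀ ((Pfin.image mrg : Finset (Set ℝ)) : Set (Set ℝ)) = Set.Icc (0:ℝ) 1 := by
    ext x
    constructor
    · rintro ⟨u, hu, hxu⟩
      obtain ⟨E, _, rfl⟩ := Finset.mem_image.mp (Finset.mem_coe.mp hu)
      exact hmrgIcc E hxu
    · intro hx
      obtain ⟨E, hE, hxE⟩ := merged_cover hPfacts hPdisj hPne hEminP hx
      exact ⟨mrg E, Finset.mem_coe.mpr (Finset.mem_image.mpr ⟨E, hE, rfl⟩), hxE⟩
  have hcard : (Pfin.image mrg).card ≤ k := by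
    refine le_trans Finset.card_image_le ?_
    refine le_trans (Finset.card_filter_le _ _) ?_
    refine le_trans Finset.card_image_le ?_
    simp
  set ρ0 : Classification ω := ⟨Pfin.image mrg, hInt, hPos, hPD, hCov⟩ with hρdef
  -- the null exceptional set
  set Z : Finset (Fin k) := Finset.univ.filter (fun i => ω (D i) = 0) with hZdef
  have hNul : ω (⋃ i ∈ Z, D i) = 0 := by
    refine le_antisymm (le_trans (measure_biUnion_finset_le _ _) ?_) zero_le
    refine le_of_eq (Finset.sum_eq_zero ?_)
    intro i hi
    exact (Finset.mem_filter.mp hi).2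
  have hmrgU : ∀ (x : ℝ) E E', E ∈ Pfin → E' ∈ Pfin → x ∈ mrg E → x ∈ mrg E' → E = E' := by
    intro x E E' hE hE' h1 h2
    by_contra hne
    have hdisjEE := merged_disjoint (P := Pfin) (Emin := Emin) hPfacts hPdisj hE hE' hne
    have hmem : x ∈ mergedSet Pfin Emin E ∩ mergedSet Pfin Emin E' := ⟨h1, h2⟩
    rw [hdisjEE] at hmem
    exact absurd hmem (Set.notMem_empty x)
  have hM5 : ∀ x, x ∈ Set.Icc (0:ℝ) 1 → x ∉ (⋃ i ∈ Z, D i) →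
      ∃ j, x ∈ D j ∧ 0 < ω (D j) ∧ D j ∈ Pfin := by
    intro x hx hn
    obtain ⟨j, hj⟩ := hDcover x hx
    have hz : ω (D j) ≠ 0 := by
      intro h0
      exact hn (Set.mem_biUnion (Finset.mem_filter.mpr ⟨Finset.mem_univ j, h0⟩) hj)
    exact ⟨j, hj, pos_iff_ne_zero.mpr hz, hPmemD j (pos_iff_ne_zero.mpr hz)⟩
  -- claim A : unions of limit parts match unions of merged parts up to null sets
  have hclaimA : ∀ S' : Finset (Fin k),
      ((⋃ i ∈ S', D i) ∆
        (⋃₀ (((Pfin.filter (fun E => ∃ i ∈ S', E = D i)).image mrg : Finset (Set ℝ)) : Set (Set ℝ))))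
        ⊆ ⋃ i ∈ Z, D i := by
    intro S' x hx
    rcases Set.mem_symmDiff.mp hx with ⟨hx1, hx2⟩ | ⟨hx1, hx2⟩
    · rw [Set.mem_iUnion₂] at hx1
      obtain ⟨i, hiS, hxi⟩ := hx1
      by_cases h0 : ω (D i) = 0
      · exact Set.mem_biUnion (Finset.mem_filter.mpr ⟨Finset.mem_univ i, h0⟩) hxi
      · exfalso
        apply hx2
        have hDiP : D i ∈ Pfin := hPmemD i (pos_iff_ne_zero.mpr h0)
        have hT : mrg (D i) ∈ (Pfin.filter (fun E => ∃ i ∈ S', E = D i)).image mrg :=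
          Finset.mem_image.mpr ⟨D i, Finset.mem_filter.mpr ⟨hDiP, ⟨i, hiS, rfl⟩⟩, rfl⟩
        exact Set.subset_sUnion_of_mem (Finset.mem_coe.mpr hT)
          (mem_merged_self hPfacts hPdisj hDiP hxi)
    · obtain ⟨u, hu, hxu⟩ := hx1
      obtain ⟨E, hEf, rfl⟩ := Finset.mem_image.mp (Finset.mem_coe.mp hu)
      have hEP : E ∈ Pfin := (Finset.mem_filter.mp hEf).1
      obtain ⟨i₀, hi₀S, hEeq⟩ := (Finset.mem_filter.mp hEf).2
      have hxI : x ∈ Set.Icc (0:ℝ) 1 := hmrgIcc E hxu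
      by_cases hN : x ∈ ⋃ i ∈ Z, D i
      · exact hN
      · exfalso
        apply hx2
        obtain ⟨j, hxj, hjpos, hjP⟩ := hM5 x hxI hN
        have hEj : E = D j := hmrgU x E (D j) hEP hjP hxu (mem_merged_self hPfacts hPdisj hjP hxj)
        rw [Set.mem_iUnion₂]
        refine ⟨i₀, hi₀S, ?_⟩
        rw [← hEeq, hEj]
        exact hxj
  -- claim B
  have hclaimB : ∀ T : Finset (Set ℝ), T ⊆ Pfin.image mrg →
      ((⋃₀ (T : Set (Set ℝ))) ∆
        (⋃ i ∈ Finset.univ.filter (fun i => 0 < ω (D i) ∧ mrg (D i) ∈ T), D i)) ⊆ ⋃ i ∈ Z, D i := by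
    intro T hTsub x hx
    rcases Set.mem_symmDiff.mp hx with ⟨hx1, hx2⟩ | ⟨hx1, hx2⟩
    · obtain ⟨u, hu, hxu⟩ := hx1
      obtain ⟨E, hEP, rfl⟩ := Finset.mem_image.mp (hTsub (Finset.mem_coe.mp hu))
      have hxI : x ∈ Set.Icc (0:ℝ) 1 := hmrgIcc E hxu
      by_cases hN : x ∈ ⋃ i ∈ Z, D i
      · exact hN
      · exfalso
        apply hx2
        obtain ⟨j, hxj, hjpos, hjP⟩ := hM5 x hxI hN
        have hEj : E = D j := hmrgU x E (D j) hEP hjP hxu (mem_merged_self hPfacts hPdisj hjP hxj)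
        rw [Set.mem_iUnion₂]
        refine ⟨j, Finset.mem_filter.mpr ⟨Finset.mem_univ j, hjpos, ?_⟩, hxj⟩
        rw [← hEj]
        exact Finset.mem_coe.mp hu
    · rw [Set.mem_iUnion₂] at hx1
      obtain ⟨i, hiS, hxi⟩ := hx1
      obtain ⟨hipos, hiT⟩ := (Finset.mem_filter.mp hiS).2
      exfalso
      apply hx2
      exact Set.subset_sUnion_of_mem (Finset.mem_coe.mpr hiT)
        (mem_merged_self hPfacts hPdisj (hPmemD i hipos) hxi)
  -- the error sequence
  set ε : ℕ → ℝ≥0∞ := fun m => ∑ i ∈ (Finset.univ : Finset (Fin k)), ω (d m i ∆ D i) with hεdef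
  have hεtend : Tendsto ε atTop (𝓝 0) := by
    have h := tendsto_finset_sum (Finset.univ : Finset (Fin k))
      (fun i _ => hDtend i)
    simpa using h
  -- the two delta bounds
  have hδ1 : ∀ m, deltaOmega ω (π (Φ m)) ρ0 ≤ ε m := by
    intro m
    rw [deltaOmega]
    apply iSup₂_le
    rintro C ⟨S, hS, rfl⟩
    set S' : Finset (Fin k) := Finset.univ.filter (fun i => d m i ∈ S) with hS'def
    have hCS : ⋃₀ (S : Set (Set ℝ)) = ⋃ i ∈ S', d m i := by
      ext x
      constructor
      · rintro ⟨C₀, hC₀, hx⟩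
        obtain ⟨i, hi⟩ := hc2 (Φ m) C₀ (hS (Finset.mem_coe.mp hC₀))
        have hdi : d m i = C₀ := hi
        rw [Set.mem_iUnion₂]
        refine ⟨i, Finset.mem_filter.mpr ⟨Finset.mem_univ i, ?_⟩, ?_⟩
        · rw [hdi]; exact Finset.mem_coe.mp hC₀
        · rw [hdi]; exact hx
      · intro hx
        rw [Set.mem_iUnion₂] at hx
        obtain ⟨i, hiS, hx⟩ := hx
        exact ⟨d m i, Finset.mem_coe.mpr ((Finset.mem_filter.mp hiS).2), hx⟩
    have hC'mem : ⋃₀ (((Pfin.filter (fun E => ∃ i ∈ S', E = D i)).image mrg : Finset (Set ℝ)) :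
        Set (Set ℝ)) ∈ sigmaAlg ρ0 :=
      ⟨(Pfin.filter (fun E => ∃ i ∈ S', E = D i)).image mrg,
        Finset.image_subset_image (Finset.filter_subset _ _), rfl⟩
    refine le_trans (iInf₂_le _ hC'mem) ?_
    refine le_trans (meas_symmDiff_triangle ω _ (⋃ i ∈ S', D i) _) ?_
    have hb1 : ω ((⋃₀ (S : Set (Set ℝ))) ∆ (⋃ i ∈ S', D i)) ≤ ε m := by
      rw [hCS]
      refine le_trans (meas_symmDiff_biUnion ω S' _ _) ?_
      exact Finset.sum_le_sum_of_subset (Finset.subset_univ _)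
    have hb2 : ω ((⋃ i ∈ S', D i) ∆
        (⋃₀ (((Pfin.filter (fun E => ∃ i ∈ S', E = D i)).image mrg : Finset (Set ℝ)) :
          Set (Set ℝ)))) = 0 :=
      le_antisymm (le_trans (measure_mono (hclaimA S')) (le_of_eq hNul)) zero_le
    exact le_trans (add_le_add hb1 (le_of_eq hb2)) (by rw [add_zero])
  have hδ2 : ∀ m, deltaOmega ω ρ0 (π (Φ m)) ≤ ε m := by
    intro m
    rw [deltaOmega]
    apply iSup₂_le
    rintro C' ⟨T, hTsub, rfl⟩
    set S' : Finset (Fin k) := Finset.univ.filter (fun i => 0 < ω (D i) ∧ mrg (D i) ∈ T) with hS'def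
    have hSSsub : S'.image (fun i => d m i) ⊆ (π (Φ m)).parts := by
      intro u hu
      obtain ⟨i, _, rfl⟩ := Finset.mem_image.mp hu
      exact hdmem m i
    have hCmem : ⋃₀ ((S'.image (fun i => d m i) : Finset (Set ℝ)) : Set (Set ℝ)) ∈
        sigmaAlg (π (Φ m)) := ⟨S'.image (fun i => d m i), hSSsub, rfl⟩
    refine le_trans (iInf₂_le _ hCmem) ?_
    have hSS : ⋃₀ ((S'.image (fun i => d m i) : Finset (Set ℝ)) : Set (Set ℝ)) =
        ⋃ i ∈ S', d m i := by
      ext x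
      constructor
      · rintro ⟨u, hu, hx⟩
        obtain ⟨i, hiS, rfl⟩ := Finset.mem_image.mp (Finset.mem_coe.mp hu)
        exact Set.mem_biUnion hiS hx
      · intro hx
        rw [Set.mem_iUnion₂] at hx
        obtain ⟨i, hiS, hx⟩ := hx
        exact ⟨d m i, Finset.mem_coe.mpr (Finset.mem_image.mpr ⟨i, hiS, rfl⟩), hx⟩
    refine le_trans (meas_symmDiff_triangle ω _ (⋃ i ∈ S', D i) _) ?_
    have hb1 : ω ((⋃₀ (T : Set (Set ℝ))) ∆ (⋃ i ∈ S', D i)) = 0 :=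
      le_antisymm (le_trans (measure_mono (hclaimB T hTsub)) (le_of_eq hNul)) zero_le
    have hb2 : ω ((⋃ i ∈ S', D i) ∆
        (⋃₀ ((S'.image (fun i => d m i) : Finset (Set ℝ)) : Set (Set ℝ)))) ≤ ε m := by
      rw [hSS]
      refine le_trans (meas_symmDiff_biUnion ω S' _ _) ?_
      refine le_trans (Finset.sum_le_sum ?_) (Finset.sum_le_sum_of_subset (Finset.subset_univ _))
      intro i _
      rw [symmDiff_comm]
    exact le_trans (add_le_add (le_of_eq hb1) hb2) (by rw [zero_add])
  refine ⟨Φ, hΦmono, ρ0, hcard, ?_⟩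
  refine squeeze_zero' (fun m => ?_) hεtend
  rw [dOmega]
  exact max_le (hδ1 m) (hδ2 m)

end
end

section
/- Let π₀ = {I} be the trivial classification and suppose there exist a classification π̂ ∈ Π_{≤k} and a competitive allocation (x̂^i) of E(π̂) such that V_i(π̂,x̂^i) > V_i(π₀,y^i) for every agent i and every competitive allocation (y^i) of E(π₀). Then there is a d_ω-open subset O of Π_{≤k} containing π₀ such that for every π ∈ O and every competitive allocation (z^i) of E(π), V_i(π̂,x̂^i) > V_i(π,z^i) for every i; in particular, every competitive configuration based on a classification in O is Pareto-dominated by the competitive configuration ⟨π̂,(x̂^i)⟩. -/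
open MeasureTheory Set
open scoped ENNReal NNReal symmDiff

noncomputable section

/-- The simple function `∑_{C ∈ π} (x_C / ω(C)) 𝟙_C`, as an element of `L¹(ω)`. -/
noncomputable def tradable (ω : Measure ℝ) [IsFiniteMeasure ω] (π : Classification ω)
    (x : Set ℝ → ℝ) : Lp ℝ 1 ω :=
  ∑ C ∈ π.parts.attach,
    indicatorConstLp 1 ((π.isInterval C.1 C.2).measurableSet) (measure_ne_top ω C.1)
      (x C.1 / (ω C.1).toReal)

/-- Utility of a tradable bundle: `V(π,x) = U (∑_C (x_C/ω(C)) 𝟙_C)`. -/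
noncomputable def V (ω : Measure ℝ) [IsFiniteMeasure ω] (U : Lp ℝ 1 ω → ℝ)
    (π : Classification ω) (x : Set ℝ → ℝ) : ℝ :=
  U (tradable ω π x)

/-- The positive cone `L¹(ω)₊`. -/
def PosCone (ω : Measure ℝ) : Set (Lp ℝ 1 ω) :=
  {f | ∀ᵐ t ∂ω, 0 ≤ f t}

/-- `U` is a utility function on `L¹(ω)₊`: concave, norm-continuous and monotone. -/
def IsUtility (ω : Measure ℝ) (U : Lp ℝ 1 ω → ℝ) : Prop :=
  ContinuousOn U (PosCone ω) ∧ ConcaveOn ℝ (PosCone ω) U ∧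
    ∀ f g : Lp ℝ 1 ω, f ∈ PosCone ω → g ∈ PosCone ω →
      (∀ᵐ t ∂ω, g t ≤ f t) → U g ≤ U f

/-- Competitive equilibrium of the economy `E(π)` with claims `κ` and utilities `U`. -/
def IsEquilibrium {n : ℕ} (ω : Measure ℝ) [IsFiniteMeasure ω] (κ : Fin n → ℝ)
    (U : Fin n → Lp ℝ 1 ω → ℝ) (π : Classification ω)
    (p : Set ℝ → ℝ) (x : Fin n → Set ℝ → ℝ) : Prop :=
  (∀ C ∈ π.parts, 0 ≤ p C) ∧
  (∀ i, ∀ C ∈ π.parts, 0 ≤ x i C) ∧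
  (∀ C ∈ π.parts, ∑ i, x i C ≤ (ω C).toReal) ∧
  (∀ i, ∑ C ∈ π.parts, p C * x i C ≤ κ i * ∑ C ∈ π.parts, p C * (ω C).toReal) ∧
  (∀ i, ∀ y : Set ℝ → ℝ, (∀ C ∈ π.parts, 0 ≤ y C) →
    V ω (U i) π (x i) < V ω (U i) π y →
    κ i * ∑ C ∈ π.parts, p C * (ω C).toReal < ∑ C ∈ π.parts, p C * y C)

/-- `(x^i)` is a competitive allocation of `E(π)` if some price supports it. -/
def IsCompetitiveAlloc {n : ℕ} (ω : Measure ℝ) [IsFiniteMeasure ω] (κ : Fin n → ℝ)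
    (U : Fin n → Lp ℝ 1 ω → ℝ) (π : Classification ω)
    (x : Fin n → Set ℝ → ℝ) : Prop :=
  ∃ p : Set ℝ → ℝ, IsEquilibrium ω κ U π p x

set_option linter.unusedSectionVars false
section AuxLemmas

variable {ω : Measure ℝ} [IsFiniteMeasure ω]

/-- `c·𝟙_{[0,1]}` as an element of `L¹(ω)`. -/
noncomputable def oneC (ω : Measure ℝ) [IsFiniteMeasure ω] (c : ℝ) : Lp ℝ 1 ω :=
  indicatorConstLp 1 (measurableSet_Icc : MeasurableSet (Icc (0:ℝ) 1)) (measure_ne_top ω _) c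

lemma oneC_coe (c : ℝ) :
    ⇑(oneC ω c) =ᵐ[ω] (Icc (0:ℝ) 1).indicator (fun _ => c) :=
  indicatorConstLp_coeFn

lemma oneC_sub (a b : ℝ) : oneC ω a - oneC ω b = oneC ω (a - b) :=
  indicatorConstLp_sub

lemma norm_oneC (hω : ω (Icc (0:ℝ) 1) = 1) (c : ℝ) : ‖oneC ω c‖ = |c| := by
  rw [oneC, norm_indicatorConstLp one_ne_zero ENNReal.one_ne_top, measureReal_def, hω]
  simp [Real.norm_eq_abs]

lemma norm_oneC_sub (hω : ω (Icc (0:ℝ) 1) = 1) (a b : ℝ) :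
    ‖oneC ω a - oneC ω b‖ = |a - b| := by
  rw [oneC_sub, norm_oneC hω]

lemma oneC_mem_posCone {c : ℝ} (hc : 0 ≤ c) : oneC ω c ∈ PosCone ω := by
  filter_upwards [oneC_coe (ω := ω) c] with t ht
  rw [ht]
  exact Set.indicator_nonneg (fun _ _ => hc) t

lemma oneC_le_ae {a b : ℝ} (hab : a ≤ b) :
    ∀ᵐ t ∂ω, (oneC ω a) t ≤ (oneC ω b) t := by
  filter_upwards [oneC_coe (ω := ω) a, oneC_coe (ω := ω) b] with t h1 h2
  rw [h1, h2]
  by_cases ht : t ∈ Icc (0:ℝ) 1 <;>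
    simp [Set.indicator_apply, ht, hab]

lemma oneC_combo (l a b : ℝ) :
    l • oneC ω a + (1-l) • oneC ω b = oneC ω (l*a + (1-l)*b) := by
  apply Lp.ext
  filter_upwards [Lp.coeFn_add (l • oneC ω a) ((1-l) • oneC ω b),
    Lp.coeFn_smul l (oneC ω a), Lp.coeFn_smul (1-l) (oneC ω b),
    oneC_coe (ω := ω) a, oneC_coe (ω := ω) b, oneC_coe (ω := ω) (l*a + (1-l)*b)]
    with t h1 h2 h3 h4 h5 h6
  rw [h1, Pi.add_apply, h2, h3, Pi.smul_apply, Pi.smul_apply, h4, h5, h6]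
  by_cases ht : t ∈ Icc (0:ℝ) 1 <;>
    simp [Set.indicator_apply, ht, smul_eq_mul]

end AuxLemmas
section AuxLemmas2

variable {ω : Measure ℝ} [IsFiniteMeasure ω]
open Classical

lemma part_subset (π : Classification ω) {C : Set ℝ} (hC : C ∈ π.parts) :
    C ⊆ Icc (0:ℝ) 1 := by
  rw [← π.cover]; exact subset_sUnion_of_mem hC

lemma part_toReal_pos (π : Classification ω) {C : Set ℝ} (hC : C ∈ π.parts) :
    0 < (ω C).toReal :=
  ENNReal.toReal_pos (π.posMeas C hC).ne' (measure_ne_top ω C)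

/-- The summand of `tradable` as a total function. -/
noncomputable def partFn (π : Classification ω) (x : Set ℝ → ℝ) : Set ℝ → Lp ℝ 1 ω :=
  fun A => if hA : A ∈ π.parts then
    indicatorConstLp 1 ((π.isInterval A hA).measurableSet) (measure_ne_top ω A)
      (x A / (ω A).toReal) else 0

lemma tradable_eq_sum (π : Classification ω) (x : Set ℝ → ℝ) :
    tradable ω π x = ∑ C ∈ π.parts, partFn π x C := by
  classical
  rw [tradable, ← Finset.sum_attach π.parts (partFn π x)]
  refine Finset.sum_congr rfl fun C _ => ?_
  simp only [partFn, dif_pos C.2]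

lemma partFn_coe (π : Classification ω) (x : Set ℝ → ℝ) {A : Set ℝ} (hA : A ∈ π.parts) :
    ⇑(partFn π x A) =ᵐ[ω] A.indicator (fun _ => x A / (ω A).toReal) := by
  classical
  simp only [partFn, dif_pos hA]
  exact indicatorConstLp_coeFn

lemma lp_sum_coe {ι : Type*} (s : Finset ι) (f : ι → Lp ℝ 1 ω) :
    ⇑(∑ i ∈ s, f i) =ᵐ[ω] fun t => ∑ i ∈ s, f i t := by
  classical
  induction s using Finset.induction_on with
  | empty => simp only [Finset.sum_empty]; exact Lp.coeFn_zero ℝ 1 ω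
  | insert _ _ hni ih =>
    rw [Finset.sum_insert hni]
    filter_upwards [Lp.coeFn_add _ (∑ i ∈ _, f i), ih] with t h1 h2
    rw [h1, Pi.add_apply, h2]
    simp [Finset.sum_insert hni]

lemma tradable_coe (π : Classification ω) (x : Set ℝ → ℝ) :
    ⇑(tradable ω π x) =ᵐ[ω]
      fun t => ∑ C ∈ π.parts, C.indicator (fun _ => x C / (ω C).toReal) t := by
  rw [tradable_eq_sum]
  have h1 := lp_sum_coe π.parts (partFn π x)
  have h2 : ∀ᵐ t ∂ω, ∀ C ∈ π.parts, (partFn π x C) t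
      = C.indicator (fun _ => x C / (ω C).toReal) t := by
    rw [Filter.eventually_all_finset]
    exact fun C hC => partFn_coe π x hC
  filter_upwards [h1, h2] with t h1 h2
  rw [h1]
  exact Finset.sum_congr rfl fun C hC => h2 C hC

/-- evaluation of the indicator sum at a point of a given part -/
lemma sum_indicator_eval_mem (π : Classification ω) (g : Set ℝ → ℝ) {C₁ : Set ℝ}
    (hC₁ : C₁ ∈ π.parts) {t : ℝ} (ht : t ∈ C₁) :
    ∑ C ∈ π.parts, C.indicator (fun _ => g C) t = g C₁ := by
  rw [Finset.sum_eq_single C₁]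
  · exact Set.indicator_of_mem ht _
  · intro C hC hne
    apply Set.indicator_of_notMem
    intro htC
    exact (π.pairwiseDisj hC hC₁ hne).ne_of_mem htC ht rfl
  · exact fun h => absurd hC₁ h

lemma sum_indicator_eval_nmem (π : Classification ω) (g : Set ℝ → ℝ) {t : ℝ}
    (ht : t ∉ Icc (0:ℝ) 1) :
    ∑ C ∈ π.parts, C.indicator (fun _ => g C) t = 0 := by
  apply Finset.sum_eq_zero
  intro C hC
  exact Set.indicator_of_notMem (fun htC => ht (part_subset π hC htC)) _

lemma exists_part (π : Classification ω) {t : ℝ} (ht : t ∈ Icc (0:ℝ) 1) :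
    ∃ C ∈ π.parts, t ∈ C := by
  rw [← π.cover] at ht
  obtain ⟨C, hC, htC⟩ := ht
  exact ⟨C, hC, htC⟩

end AuxLemmas2
section AuxLemmas3

variable {ω : Measure ℝ} [IsFiniteMeasure ω]
open Classical
set_option linter.unusedSectionVars false

lemma tradable_const (π : Classification ω) (c : ℝ) :
    tradable ω π (fun C => c * (ω C).toReal) = oneC ω c := by
  apply Lp.ext
  filter_upwards [tradable_coe π (fun C => c * (ω C).toReal), oneC_coe (ω := ω) c]
    with t h1 h2
  rw [h1, h2]
  by_cases ht : t ∈ Icc (0:ℝ) 1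
  · obtain ⟨C₁, hC₁, htC₁⟩ := exists_part π ht
    rw [sum_indicator_eval_mem π _ hC₁ htC₁, Set.indicator_of_mem ht]
    field_simp [(part_toReal_pos π hC₁).ne']
  · rw [sum_indicator_eval_nmem π _ ht, Set.indicator_of_notMem ht]

lemma indicatorConstLp_zero' {s : Set ℝ} (hs : MeasurableSet s) (hμs : ω s ≠ ⊤) :
    indicatorConstLp 1 hs hμs (0:ℝ) = 0 := by
  apply Lp.ext
  filter_upwards [indicatorConstLp_coeFn (μ := ω) (hs := hs) (hμs := hμs) (c := (0:ℝ)),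
    Lp.coeFn_zero ℝ 1 ω] with t h1 h2
  rw [h1, h2]
  simp

lemma tradable_single (π : Classification ω) {C₀ : Set ℝ} (hC₀ : C₀ ∈ π.parts) (v : ℝ)
    (hm : MeasurableSet C₀) :
    tradable ω π (fun C => if C = C₀ then v else 0)
      = indicatorConstLp 1 hm (measure_ne_top ω C₀) (v / (ω C₀).toReal) := by
  rw [tradable_eq_sum, Finset.sum_eq_single C₀]
  · simp only [partFn, dif_pos hC₀, if_pos rfl]
    simp
  · intro C hC hne
    simp only [partFn, dif_pos hC, if_neg hne, zero_div]
    exact indicatorConstLp_zero' _ _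
  · exact fun h => absurd hC₀ h

lemma tradable_posCone (π : Classification ω) (x : Set ℝ → ℝ)
    (hx : ∀ C ∈ π.parts, 0 ≤ x C) : tradable ω π x ∈ PosCone ω := by
  filter_upwards [tradable_coe π x] with t ht
  rw [ht]
  apply Finset.sum_nonneg
  intro C hC
  exact Set.indicator_nonneg
    (fun _ _ => div_nonneg (hx C hC) ENNReal.toReal_nonneg) t

lemma tradable_le_one (π : Classification ω) (x : Set ℝ → ℝ)
    (hx1 : ∀ C ∈ π.parts, x C ≤ (ω C).toReal) :
    ∀ᵐ t ∂ω, (tradable ω π x) t ≤ (oneC ω 1) t := by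
  filter_upwards [tradable_coe π x, oneC_coe (ω := ω) 1] with t h1 h2
  rw [h1, h2]
  by_cases ht : t ∈ Icc (0:ℝ) 1
  · obtain ⟨C₁, hC₁, htC₁⟩ := exists_part π ht
    rw [sum_indicator_eval_mem π _ hC₁ htC₁, Set.indicator_of_mem ht]
    exact div_le_one_of_le₀ (hx1 C₁ hC₁) ENNReal.toReal_nonneg
  · rw [sum_indicator_eval_nmem π _ ht, Set.indicator_of_notMem ht]

lemma diff_eq_biUnion (π : Classification ω) {C₀ : Set ℝ} (hC₀ : C₀ ∈ π.parts) :
    Icc (0:ℝ) 1 \ C₀ = ⋃ C ∈ π.parts.erase C₀, C := by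
  ext t
  constructor
  · rintro ⟨ht, htC₀⟩
    obtain ⟨C, hC, htC⟩ := exists_part π ht
    have hne : C ≠ C₀ := fun h => htC₀ (h ▸ htC)
    exact Set.mem_biUnion (Finset.mem_erase.2 ⟨hne, hC⟩) htC
  · intro ht
    simp only [Set.mem_iUnion] at ht
    obtain ⟨C, hC, htC⟩ := ht
    rw [Finset.mem_erase] at hC
    refine ⟨part_subset π hC.2 htC, fun htC₀ => ?_⟩
    exact (π.pairwiseDisj hC.2 hC₀ hC.1).ne_of_mem htC htC₀ rfl

lemma meas_finset_biUnion (s : Finset (Set ℝ))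
    (hd : (s : Set (Set ℝ)).PairwiseDisjoint id)
    (hm : ∀ C ∈ s, MeasurableSet C) :
    ω (⋃ C ∈ s, C) = ∑ C ∈ s, ω C :=
  measure_biUnion_finset hd hm

lemma meas_erase_sum (π : Classification ω) {C₀ : Set ℝ} (hC₀ : C₀ ∈ π.parts) :
    ∑ C ∈ π.parts.erase C₀, (ω C).toReal = (ω (Icc (0:ℝ) 1 \ C₀)).toReal := by
  rw [diff_eq_biUnion π hC₀, meas_finset_biUnion _
    (π.pairwiseDisj.subset (by simp [Finset.coe_subset])) (fun C hC =>
      (π.isInterval C (Finset.mem_of_mem_erase hC)).measurableSet)]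
  rw [ENNReal.toReal_sum (fun C _ => measure_ne_top ω C)]

lemma meas_parts_sum (π : Classification ω) :
    ∑ C ∈ π.parts, ω C = ω (Icc (0:ℝ) 1) := by
  rw [← π.cover, sUnion_eq_biUnion]
  rw [← meas_finset_biUnion π.parts π.pairwiseDisj
    (fun C hC => (π.isInterval C hC).measurableSet)]
  rfl

lemma parts_nonempty (hω : ω (Icc (0:ℝ) 1) = 1) (π : Classification ω) :
    π.parts.Nonempty := by
  rcases Finset.eq_empty_or_nonempty π.parts with h | h
  · exfalso
    have := π.cover
    rw [h] at this
    simp only [Finset.coe_empty, Set.sUnion_empty] at this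
    rw [← this] at hω
    simp at hω
  · exact h

end AuxLemmas3
section AuxLemmas4

variable {ω : Measure ℝ} [IsFiniteMeasure ω]
open Classical
set_option linter.unusedSectionVars false

lemma partFn_sub_partFn (π : Classification ω) (x y : Set ℝ → ℝ) {C : Set ℝ}
    (hC : C ∈ π.parts) :
    partFn π x C - partFn π y C
      = indicatorConstLp 1 ((π.isInterval C hC).measurableSet) (measure_ne_top ω C)
          (x C / (ω C).toReal - y C / (ω C).toReal) := by
  simp only [partFn, dif_pos hC]
  exact indicatorConstLp_sub

lemma norm_partFn_sub (π : Classification ω) (x y : Set ℝ → ℝ) {C : Set ℝ}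
    (hC : C ∈ π.parts) :
    ‖partFn π x C - partFn π y C‖ = |x C - y C| := by
  rw [partFn_sub_partFn π x y hC,
    norm_indicatorConstLp one_ne_zero ENNReal.one_ne_top]
  have hpos := part_toReal_pos π hC
  rw [div_sub_div_same, Real.norm_eq_abs, abs_div, abs_of_pos hpos]
  simp only [ENNReal.toReal_one, one_div, inv_one, Real.rpow_one, measureReal_def]
  field_simp

lemma norm_tradable_sub_tradable (π : Classification ω) (x y : Set ℝ → ℝ) :
    ‖tradable ω π x - tradable ω π y‖ ≤ ∑ C ∈ π.parts, |x C - y C| := by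
  rw [tradable_eq_sum, tradable_eq_sum, ← Finset.sum_sub_distrib]
  refine (norm_sum_le _ _).trans ?_
  refine Finset.sum_le_sum fun C hC => ?_
  rw [norm_partFn_sub π x y hC]

lemma norm_tradable_sub_oneC (π : Classification ω) (x : Set ℝ → ℝ) {C₀ : Set ℝ}
    (hC₀ : C₀ ∈ π.parts) (hx0 : ∀ C ∈ π.parts, 0 ≤ x C)
    (hx2 : ∀ C ∈ π.parts, x C ≤ 2 * (ω C).toReal) :
    ‖tradable ω π x - oneC ω (x C₀ / (ω C₀).toReal)‖
      ≤ 2 * (ω (Icc (0:ℝ) 1 \ C₀)).toReal := by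
  set c := x C₀ / (ω C₀).toReal with hc
  have hc0 : 0 ≤ c := div_nonneg (hx0 C₀ hC₀) ENNReal.toReal_nonneg
  have hc2 : c ≤ 2 := by
    rw [hc, div_le_iff₀ (part_toReal_pos π hC₀)]
    calc x C₀ ≤ 2 * (ω C₀).toReal := hx2 C₀ hC₀
    _ = 2 * (ω C₀).toReal := rfl
  rw [← tradable_const π c]
  refine (norm_tradable_sub_tradable π x _).trans ?_
  have hsplit : ∑ C ∈ π.parts, |x C - c * (ω C).toReal|
      = |x C₀ - c * (ω C₀).toReal|
        + ∑ C ∈ π.parts.erase C₀, |x C - c * (ω C).toReal| :=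
    (Finset.add_sum_erase _ _ hC₀).symm
  rw [hsplit]
  have h0 : x C₀ - c * (ω C₀).toReal = 0 := by
    rw [hc, div_mul_cancel₀]
    · ring
    · exact (part_toReal_pos π hC₀).ne'
  rw [h0, abs_zero, zero_add, ← meas_erase_sum π hC₀, Finset.mul_sum]
  refine Finset.sum_le_sum fun C hC => ?_
  have hCm := Finset.mem_of_mem_erase hC
  have h1 : 0 ≤ x C := hx0 C hCm
  have h2 : x C ≤ 2 * (ω C).toReal := hx2 C hCm
  have h3 : 0 ≤ c * (ω C).toReal := mul_nonneg hc0 ENNReal.toReal_nonneg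
  have h4 : c * (ω C).toReal ≤ 2 * (ω C).toReal :=
    mul_le_mul_of_nonneg_right hc2 ENNReal.toReal_nonneg
  rw [abs_sub_le_iff]
  constructor <;> linarith

lemma tradable_singleton {A : Set ℝ} (π : Classification ω) (h : π.parts = {A})
    (y : Set ℝ → ℝ) (hm : MeasurableSet A) :
    tradable ω π y = indicatorConstLp 1 hm (measure_ne_top ω A) (y A / (ω A).toReal) := by
  have hA : A ∈ π.parts := by rw [h]; exact Finset.mem_singleton_self A
  rw [tradable_eq_sum, h, Finset.sum_singleton]
  simp only [partFn, dif_pos hA]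

end AuxLemmas4
section AuxLemmas5

variable {ω : Measure ℝ} [IsFiniteMeasure ω]
open Classical
set_option linter.unusedSectionVars false

lemma parts_eq_singleton {π₀ : Classification ω}
    (hπ₀ : (π₀.parts : Set (Set ℝ)) = {Set.Icc (0 : ℝ) 1}) :
    π₀.parts = ({Icc (0:ℝ) 1} : Finset (Set ℝ)) := by
  apply Finset.coe_injective
  rw [hπ₀, Finset.coe_singleton]

lemma V_pi0 (hω : ω (Icc (0:ℝ) 1) = 1) {π₀ : Classification ω}
    (hπ₀ : (π₀.parts : Set (Set ℝ)) = {Set.Icc (0 : ℝ) 1})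
    (Uu : Lp ℝ 1 ω → ℝ) (y : Set ℝ → ℝ) :
    V ω Uu π₀ y = Uu (oneC ω (y (Icc (0:ℝ) 1))) := by
  rw [V, tradable_singleton π₀ (parts_eq_singleton hπ₀) y measurableSet_Icc, hω]
  simp only [ENNReal.toReal_one, div_one]
  rfl

lemma mem_sigmaAlg_self {π : Classification ω} {C : Set ℝ} (hC : C ∈ π.parts) :
    C ∈ sigmaAlg π :=
  ⟨{C}, Finset.singleton_subset_iff.2 hC, by simp⟩

lemma empty_mem_sigmaAlg (π : Classification ω) : (∅ : Set ℝ) ∈ sigmaAlg π :=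
  ⟨∅, Finset.empty_subset _, by simp⟩

lemma sigmaAlg_pi0 {π₀ : Classification ω}
    (hπ₀ : (π₀.parts : Set (Set ℝ)) = {Set.Icc (0 : ℝ) 1}) {B : Set ℝ}
    (hB : B ∈ sigmaAlg π₀) : B = ∅ ∨ B = Icc (0:ℝ) 1 := by
  obtain ⟨S, hS, rfl⟩ := hB
  rw [parts_eq_singleton hπ₀, Finset.subset_singleton_iff] at hS
  rcases hS with rfl | rfl
  · left; simp
  · right; simp

lemma deltaOmega_self (π : Classification ω) : deltaOmega ω π π = 0 := by
  rw [deltaOmega, ← le_zero_iff]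
  refine iSup₂_le fun C hC => ?_
  refine (biInf_le _ hC).trans ?_
  simp

lemma deltaOmega_triangle (π₁ π₂ π₃ : Classification ω) :
    deltaOmega ω π₁ π₃ ≤ deltaOmega ω π₁ π₂ + deltaOmega ω π₂ π₃ := by
  refine iSup₂_le fun C hC => ?_
  have key : ∀ C' ∈ sigmaAlg π₂,
      (⨅ C'' ∈ sigmaAlg π₃, ω (C ∆ C'')) ≤ ω (C ∆ C') + deltaOmega ω π₂ π₃ := by
    intro C' hC'
    have h1 : (⨅ C'' ∈ sigmaAlg π₃, ω (C ∆ C''))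
        ≤ ⨅ C'' ∈ sigmaAlg π₃, (ω (C ∆ C') + ω (C' ∆ C'')) := by
      refine le_iInf₂ fun C'' hC'' => ?_
      exact (biInf_le _ hC'').trans (measure_symmDiff_le C C' C'')
    refine h1.trans ?_
    have h2 : (⨅ C'' ∈ sigmaAlg π₃, (ω (C ∆ C') + ω (C' ∆ C'')))
        = ω (C ∆ C') + ⨅ C'' ∈ sigmaAlg π₃, ω (C' ∆ C'') := by
      rw [iInf_subtype', iInf_subtype', ENNReal.add_iInf]
    rw [h2]
    have h5 : (⨅ C'' ∈ sigmaAlg π₃, ω (C' ∆ C'')) ≤ deltaOmega ω π₂ π₃ :=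
      le_iSup₂_of_le C' hC' le_rfl
    exact add_le_add_right h5 _
  have h3 : (⨅ C'' ∈ sigmaAlg π₃, ω (C ∆ C''))
      ≤ (⨅ C' ∈ sigmaAlg π₂, ω (C ∆ C')) + deltaOmega ω π₂ π₃ := by
    have h4 : (⨅ C' ∈ sigmaAlg π₂, ω (C ∆ C')) + deltaOmega ω π₂ π₃
        = ⨅ C' ∈ sigmaAlg π₂, (ω (C ∆ C') + deltaOmega ω π₂ π₃) := by
      rw [iInf_subtype', iInf_subtype', ENNReal.iInf_add]
    rw [h4]
    refine le_iInf₂ fun C' hC' => key C' hC'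
  refine h3.trans (add_le_add_left ?_ _)
  exact le_iSup₂_of_le C hC le_rfl

lemma dOmega_triangle (π₁ π₂ π₃ : Classification ω) :
    dOmega ω π₁ π₃ ≤ dOmega ω π₁ π₂ + dOmega ω π₂ π₃ := by
  rw [dOmega]
  refine max_le ?_ ?_
  · exact (deltaOmega_triangle π₁ π₂ π₃).trans
      (add_le_add (le_max_left _ _) (le_max_left _ _))
  · refine (deltaOmega_triangle π₃ π₂ π₁).trans ?_
    rw [add_comm]
    exact add_le_add (le_max_right _ _) (le_max_right _ _)

lemma dOmega_self (π : Classification ω) : dOmega ω π π = 0 := by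
  rw [dOmega, deltaOmega_self]
  simp

end AuxLemmas5
section AuxLemmas6

variable {ω : Measure ℝ} [IsFiniteMeasure ω]
open Classical
set_option linter.unusedSectionVars false

/-- monotonicity of `t ↦ U (oneC t)`. -/
lemma phi_mono {Uu : Lp ℝ 1 ω → ℝ}
    (hmono : ∀ f g : Lp ℝ 1 ω, f ∈ PosCone ω → g ∈ PosCone ω →
      (∀ᵐ t ∂ω, g t ≤ f t) → Uu g ≤ Uu f)
    {a b : ℝ} (ha : 0 ≤ a) (hab : a ≤ b) :
    Uu (oneC ω a) ≤ Uu (oneC ω b) :=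
  hmono _ _ (oneC_mem_posCone (ha.trans hab)) (oneC_mem_posCone ha) (oneC_le_ae hab)

/-- The proportional allocation `(κ_i)` is a competitive allocation of `E(π₀)`. -/
lemma kappa_competitive (hω : ω (Icc (0:ℝ) 1) = 1) {n : ℕ} (κ : Fin n → ℝ)
    (hκpos : ∀ i, 0 < κ i) (hκsum : ∑ i, κ i = 1)
    (U : Fin n → Lp ℝ 1 ω → ℝ) (hU : ∀ i, IsUtility ω (U i))
    {π₀ : Classification ω} (hπ₀ : (π₀.parts : Set (Set ℝ)) = {Set.Icc (0 : ℝ) 1}) :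
    IsCompetitiveAlloc ω κ U π₀ (fun i _ => κ i) := by
  have hparts := parts_eq_singleton hπ₀
  have hIcc : Icc (0:ℝ) 1 ∈ π₀.parts := by
    rw [hparts]; exact Finset.mem_singleton_self _
  have htr : (ω (Icc (0:ℝ) 1)).toReal = 1 := by rw [hω]; simp
  refine ⟨fun _ => 1, ?_, ?_, ?_, ?_, ?_⟩
  · exact fun C _ => zero_le_one
  · exact fun i C _ => (hκpos i).le
  · intro C hC
    rw [hparts, Finset.mem_singleton] at hC
    subst hC
    rw [htr, hκsum]
  · intro i
    rw [hparts, Finset.sum_singleton, Finset.sum_singleton, htr]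
    simp
  · intro i y hy hV
    rw [hparts, Finset.sum_singleton, Finset.sum_singleton, htr, one_mul, one_mul,
      mul_one]
    by_contra hle
    push_neg at hle
    rw [V_pi0 hω hπ₀, V_pi0 hω hπ₀] at hV
    have h1 : U i (oneC ω (y (Icc (0:ℝ) 1))) ≤ U i (oneC ω (κ i)) :=
      phi_mono (hU i).2.2 (hy _ hIcc) hle
    exact absurd hV (not_lt.2 h1)

/-- Any feasible bundle gives utility at most `U(𝟙)`. -/
lemma V_le_one (hω : ω (Icc (0:ℝ) 1) = 1) {Uu : Lp ℝ 1 ω → ℝ}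
    (hmono : ∀ f g : Lp ℝ 1 ω, f ∈ PosCone ω → g ∈ PosCone ω →
      (∀ᵐ t ∂ω, g t ≤ f t) → Uu g ≤ Uu f)
    (π : Classification ω) (x : Set ℝ → ℝ)
    (hx0 : ∀ C ∈ π.parts, 0 ≤ x C) (hx1 : ∀ C ∈ π.parts, x C ≤ (ω C).toReal) :
    V ω Uu π x ≤ Uu (oneC ω 1) :=
  hmono _ _ (oneC_mem_posCone zero_le_one) (tradable_posCone π x hx0)
    (tradable_le_one π x hx1)

/-- Uniform continuity of `U` near the segment `{t𝟙 : t ∈ [0,2]}`, within the positive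
cone. -/
lemma Ucont (hω : ω (Icc (0:ℝ) 1) = 1) {Uu : Lp ℝ 1 ω → ℝ}
    (hcont : ContinuousOn Uu (PosCone ω)) {η : ℝ} (hη : 0 < η) :
    ∃ δ : ℝ, 0 < δ ∧ ∀ t ∈ Icc (0:ℝ) 2, ∀ f ∈ PosCone ω,
      ‖f - oneC ω t‖ ≤ δ → |Uu f - Uu (oneC ω t)| ≤ η := by
  -- for each `t ∈ [0,2]` pick a radius working at `oneC t`
  have key : ∀ t : ℝ, t ∈ Icc (0:ℝ) 2 → ∃ d : ℝ, 0 < d ∧ ∀ f ∈ PosCone ω,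
      dist f (oneC ω t) < d → dist (Uu f) (Uu (oneC ω t)) < η / 2 := by
    intro t ht
    have hmem : oneC ω t ∈ PosCone ω := oneC_mem_posCone ht.1
    have := hcont (oneC ω t) hmem
    rw [Metric.continuousWithinAt_iff] at this
    obtain ⟨d, hd, hball⟩ := this (η / 2) (by linarith)
    exact ⟨d, hd, fun f hf hdist => hball hf hdist⟩
  choose! d hd hball using key
  -- compactness of [0,2]
  have hcover : Icc (0:ℝ) 2 ⊆ ⋃ t ∈ Icc (0:ℝ) 2, Metric.ball t (d t / 2) := by
    intro t ht
    exact Set.mem_biUnion ht (by simp [Metric.mem_ball, half_pos (hd t ht)])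
  obtain ⟨T, hT⟩ := isCompact_Icc.elim_finite_subcover_image
    (fun t ht => Metric.isOpen_ball) hcover
  obtain ⟨hTsub, hTfin, hTcover⟩ := hT
  have hT0 : (0:ℝ) ∈ ⋃ t ∈ T, Metric.ball t (d t / 2) := hTcover (by norm_num)
  have hTne : T.Nonempty := by
    rcases Set.eq_empty_or_nonempty T with h | h
    · rw [h] at hT0; simp at hT0
    · exact h
  lift T to Finset ℝ using hTfin
  have hTne' : T.Nonempty := by
    obtain ⟨t, ht⟩ := hTne
    exact ⟨t, ht⟩
  set δ := T.inf' hTne' (fun t => d t / 2) with hδ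
  have hδpos : 0 < δ := by
    rw [hδ, Finset.lt_inf'_iff]
    exact fun t ht => half_pos (hd t (hTsub ht))
  refine ⟨δ, hδpos, ?_⟩
  intro t ht f hf hnorm
  have htmem : t ∈ ⋃ s ∈ T, Metric.ball s (d s / 2) := hTcover ht
  simp only [Set.mem_iUnion, Metric.mem_ball] at htmem
  obtain ⟨s, hsT, hts⟩ := htmem
  have hsIcc : s ∈ Icc (0:ℝ) 2 := hTsub hsT
  have hδle : δ ≤ d s / 2 := Finset.inf'_le _ hsT
  -- dist f (oneC s) < d s
  have h1 : dist f (oneC ω s) < d s := by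
    have h2 : dist f (oneC ω t) ≤ δ := by rwa [dist_eq_norm]
    have h3 : dist (oneC ω t) (oneC ω s) < d s / 2 := by
      rw [dist_eq_norm, norm_oneC_sub hω, ← Real.dist_eq]
      exact hts
    calc dist f (oneC ω s) ≤ dist f (oneC ω t) + dist (oneC ω t) (oneC ω s) :=
          dist_triangle _ _ _
    _ < δ + d s / 2 := by exact add_lt_add_of_le_of_lt h2 h3
    _ ≤ d s / 2 + d s / 2 := by linarith
    _ = d s := by ring
  have h4 : dist (Uu f) (Uu (oneC ω s)) < η / 2 := hball s hsIcc f hf h1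
  have h5 : dist (Uu (oneC ω t)) (Uu (oneC ω s)) < η / 2 := by
    refine hball s hsIcc _ (oneC_mem_posCone ht.1) ?_
    rw [dist_eq_norm, norm_oneC_sub hω]
    calc |t - s| < d s / 2 := by rw [Real.dist_eq] at hts; exact hts
    _ ≤ d s := by linarith [hd s hsIcc]
  have := dist_triangle (Uu f) (Uu (oneC ω s)) (Uu (oneC ω t))
  rw [dist_comm (Uu (oneC ω s)) (Uu (oneC ω t))] at this
  have h6 : dist (Uu f) (Uu (oneC ω t)) < η := by
    calc dist (Uu f) (Uu (oneC ω t)) ≤ _ := this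
    _ < η / 2 + η / 2 := add_lt_add h4 h5
    _ = η := by ring
  rw [Real.dist_eq] at h6
  exact h6.le

end AuxLemmas6
section DomLemma

open Classical
set_option linter.unusedSectionVars false
set_option maxHeartbeats 1000000

/-- Core quantitative bound: any competitive allocation of a classification with a
single dominant part gives every agent strictly less than `Vh`. -/
lemma domination {ω : Measure ℝ} [IsProbabilityMeasure ω]
    (hω : ω (Icc (0:ℝ) 1) = 1)
    {n : ℕ} (κ : Fin n → ℝ) (hκpos : ∀ i, 0 < κ i) (hκ1 : ∀ i, κ i ≤ 1)
    (hκsum : ∑ i, κ i = 1)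
    (U : Fin n → Lp ℝ 1 ω → ℝ) (hU : ∀ i, IsUtility ω (U i))
    (Vh : Fin n → ℝ)
    (γ κ₀ δ₁ η₂ : ℝ) (hγpos : 0 < γ) (hκ₀pos : 0 < κ₀) (hκ₀le : ∀ l, κ₀ ≤ κ l)
    (hδ₁pos : 0 < δ₁) (hδ₁1 : δ₁ ≤ 1)
    (hη₂pos : 0 < η₂) (hη₂le₁ : η₂ ≤ γ / 8) (hη₂le₂ : η₂ ≤ γ * κ₀ * δ₁ / 16)
    (δ₁f δ₂f : Fin n → ℝ)
    (hδ₁le : ∀ l, δ₁ ≤ δ₁f l)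
    (hδ₁f : ∀ l, ∀ t ∈ Icc (0:ℝ) 2, ∀ f ∈ PosCone ω,
      ‖f - oneC ω t‖ ≤ δ₁f l → |U l f - U l (oneC ω t)| ≤ γ / 8)
    (hδ₂f : ∀ l, ∀ t ∈ Icc (0:ℝ) 2, ∀ f ∈ PosCone ω,
      ‖f - oneC ω t‖ ≤ δ₂f l → |U l f - U l (oneC ω t)| ≤ η₂)
    (hγle : ∀ l, U l (oneC ω (κ l)) + γ ≤ Vh l)
    (hVhle : ∀ l, Vh l ≤ U l (oneC ω 1))
    (π : Classification ω) {C₀ : Set ℝ} (hC₀ : C₀ ∈ π.parts)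
    (hsmallδ : ∀ l, 2 * (ω (Icc (0:ℝ) 1 \ C₀)).toReal ≤ δ₂f l)
    (p : Set ℝ → ℝ) (z : Fin n → Set ℝ → ℝ) (heq : IsEquilibrium ω κ U π p z)
    (i : Fin n) : V ω (U i) π (z i) < Vh i := by
  obtain ⟨hp1, hp2, hp3, hp4, hp5⟩ := heq
  by_contra hcon
  push_neg at hcon
  have hmono : ∀ l, ∀ f g : Lp ℝ 1 ω, f ∈ PosCone ω → g ∈ PosCone ω →
      (∀ᵐ t ∂ω, g t ≤ f t) → U l g ≤ U l f := fun l => (hU l).2.2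
  set S : ℝ := (ω (Icc (0:ℝ) 1 \ C₀)).toReal with hSdef
  have hSnn : 0 ≤ S := ENNReal.toReal_nonneg
  set wc : ℝ := (ω C₀).toReal with hwcdef
  have hwc : 0 < wc := part_toReal_pos π hC₀
  have hzsum : ∀ C ∈ π.parts, ∀ l, z l C ≤ (ω C).toReal := by
    intro C hC l
    refine le_trans ?_ (hp3 C hC)
    exact Finset.single_le_sum (fun m _ => hp2 m C hC) (Finset.mem_univ l)
  set c : Fin n → ℝ := fun l => z l C₀ / wc with hcdef
  have hc0 : ∀ l, 0 ≤ c l := fun l => div_nonneg (hp2 l C₀ hC₀) hwc.le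
  have hc1 : ∀ l, c l ≤ 1 := fun l => div_le_one_of_le₀ (hzsum C₀ hC₀ l) hwc.le
  have hcsum : ∑ l, c l ≤ 1 := by
    have h1 : ∑ l, c l = (∑ l, z l C₀) / wc := (Finset.sum_div _ _ _).symm
    rw [h1, div_le_one hwc]
    exact hp3 C₀ hC₀
  -- utilities of the equilibrium bundles
  have hfpos : ∀ l, tradable ω π (z l) ∈ PosCone ω :=
    fun l => tradable_posCone π (z l) (hp2 l)
  have hfnorm : ∀ l, ‖tradable ω π (z l) - oneC ω (c l)‖ ≤ δ₂f l := by
    intro l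
    have h := norm_tradable_sub_oneC π (z l) hC₀ (hp2 l)
      (fun C hC => (hzsum C hC l).trans
        (by linarith [ENNReal.toReal_nonneg (a := ω C)]))
    exact h.trans (hsmallδ l)
  have hUf : ∀ l, |U l (tradable ω π (z l)) - U l (oneC ω (c l))| ≤ η₂ :=
    fun l => hδ₂f l (c l) ⟨hc0 l, (hc1 l).trans one_le_two⟩ _ (hfpos l) (hfnorm l)
  -- prices
  set q : ℝ := p C₀ * wc with hqdef
  set M : ℝ := ∑ C ∈ π.parts, p C * (ω C).toReal with hMdef
  have hq0 : 0 ≤ q := mul_nonneg (hp1 C₀ hC₀) hwc.le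
  have hM0 : 0 ≤ M := Finset.sum_nonneg
    (fun C hC => mul_nonneg (hp1 C hC) ENNReal.toReal_nonneg)
  have hbudget : ∀ l, q * c l ≤ κ l * M := by
    intro l
    have h1 : q * c l = p C₀ * z l C₀ := by
      have h2 : z l C₀ / wc * wc = z l C₀ := div_mul_cancel₀ _ hwc.ne'
      calc q * c l = p C₀ * (z l C₀ / wc * wc) := by ring
      _ = p C₀ * z l C₀ := by rw [h2]
    rw [h1]
    refine le_trans ?_ (hp4 l)
    exact Finset.single_le_sum
      (fun C hC => mul_nonneg (hp1 C hC) (hp2 l C hC)) hC₀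
  -- Fact 2: affordable multiples of the big part are no better than z l
  have hF2 : ∀ l (τ : ℝ), 0 ≤ τ → τ ≤ 2 → τ * q ≤ κ l * M →
      U l (oneC ω τ) ≤ U l (oneC ω (c l)) + 2 * η₂ := by
    intro l τ hτ0 hτ2 hτaff
    set y : Set ℝ → ℝ := fun C => if C = C₀ then τ * wc else 0 with hydef
    have hy0 : ∀ C ∈ π.parts, 0 ≤ y C := by
      intro C hC
      simp only [hydef]
      by_cases h : C = C₀
      · rw [if_pos h]
        exact mul_nonneg hτ0 hwc.le
      · rw [if_neg h]
    have hcost : ∑ C ∈ π.parts, p C * y C = τ * q := by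
      rw [Finset.sum_eq_single C₀]
      · simp only [hydef, if_pos rfl]; ring
      · intro C hC hne; simp [hydef, hne]
      · intro h; exact absurd hC₀ h
    have hVle : V ω (U l) π y ≤ V ω (U l) π (z l) := by
      by_contra hVlt
      push_neg at hVlt
      have h := hp5 l y hy0 hVlt
      rw [hcost] at h
      exact absurd hτaff (not_le.2 h)
    have hy2 : ∀ C ∈ π.parts, y C ≤ 2 * (ω C).toReal := by
      intro C hC
      by_cases h : C = C₀
      · subst h
        simp only [hydef, if_pos rfl]
        nlinarith
      · simp only [hydef, if_neg h]
        positivity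
    have hyC₀ : y C₀ / wc = τ := by
      simp only [hydef, if_pos rfl]
      exact mul_div_cancel_right₀ _ hwc.ne'
    have hynorm : ‖tradable ω π y - oneC ω τ‖ ≤ δ₂f l := by
      have hb := norm_tradable_sub_oneC π y hC₀ hy0 hy2
      rw [hyC₀] at hb
      exact hb.trans (hsmallδ l)
    have hypos : tradable ω π y ∈ PosCone ω := tradable_posCone π y hy0
    have h1 := hδ₂f l τ ⟨hτ0, hτ2⟩ _ hypos hynorm
    have h2 := hUf l
    have h3 : U l (tradable ω π y) ≤ U l (tradable ω π (z l)) := hVle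
    have e1 := abs_le.1 h1
    have e2 := abs_le.1 h2
    linarith [e1.1, e1.2, e2.1, e2.2]
  -- Fact 3: the proportional bundle is affordable, so z l is no worse
  have hF3 : ∀ l, U l (oneC ω (κ l)) ≤ U l (tradable ω π (z l)) := by
    intro l
    set y : Set ℝ → ℝ := fun C => κ l * (ω C).toReal with hydef
    have hy0 : ∀ C ∈ π.parts, 0 ≤ y C := by
      intro C hC
      simp only [hydef]
      exact mul_nonneg (hκpos l).le ENNReal.toReal_nonneg
    have hcost : ∑ C ∈ π.parts, p C * y C = κ l * M := by
      rw [hMdef, Finset.mul_sum]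
      exact Finset.sum_congr rfl fun C hC => by simp only [hydef]; ring
    have hVle : V ω (U l) π y ≤ V ω (U l) π (z l) := by
      by_contra hVlt
      push_neg at hVlt
      have h := hp5 l y hy0 hVlt
      rw [hcost] at h
      exact absurd h (lt_irrefl _)
    have hVy : V ω (U l) π y = U l (oneC ω (κ l)) := by
      rw [V, hydef, tradable_const]
    rw [← hVy]
    exact hVle
  -- the contradiction hypothesis
  have hconi : Vh i ≤ U i (tradable ω π (z i)) := hcon
  have habs := abs_le.1 (hUf i)
  have hchain : U i (oneC ω (κ i)) + γ - η₂ ≤ U i (oneC ω (c i)) := by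
    have := hγle i
    linarith [habs.1, habs.2]
  -- margin: c i is at least κ i + δ₁
  have hciκ : κ i + δ₁ ≤ c i := by
    by_contra hlt
    push_neg at hlt
    have hφle : U i (oneC ω (c i)) ≤ U i (oneC ω (κ i + δ₁)) :=
      phi_mono (hmono i) (hc0 i) hlt.le
    have hκmem : κ i ∈ Icc (0:ℝ) 2 := ⟨(hκpos i).le, (hκ1 i).trans one_le_two⟩
    have hnear : ‖oneC ω (κ i + δ₁) - oneC ω (κ i)‖ ≤ δ₁f i := by
      rw [norm_oneC_sub hω, add_sub_cancel_left, abs_of_pos hδ₁pos]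
      exact hδ₁le i
    have h1 := hδ₁f i (κ i) hκmem _
      (oneC_mem_posCone (by linarith [hκpos i] : (0:ℝ) ≤ κ i + δ₁)) hnear
    have h2 := abs_le.1 h1
    linarith [h2.1, h2.2]
  -- some agent consumes less than its share
  have hj : ∃ j, c j < κ j := by
    by_contra hnj
    push_neg at hnj
    have h1 : (1:ℝ) < ∑ l, c l := by
      calc (1:ℝ) = ∑ l, κ l := hκsum.symm
      _ < ∑ l, c l := by
          refine Finset.sum_lt_sum (fun l _ => hnj l) ⟨i, Finset.mem_univ i, ?_⟩
          linarith
    linarith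
  obtain ⟨j, hcj⟩ := hj
  have hφcjκ : U j (oneC ω (c j)) ≤ U j (oneC ω (κ j)) :=
    phi_mono (hmono j) (hc0 j) hcj.le
  -- case analysis on the big-part price
  by_cases hqz : q = 0
  · have h1 := hF2 j 1 zero_le_one one_le_two
      (by rw [hqz, mul_zero]; exact mul_nonneg (hκpos j).le hM0)
    have h2 := hVhle j
    have h3 := hγle j
    have h4 : U j (oneC ω 1) ≤ U j (oneC ω (κ j)) + 2 * η₂ := by linarith
    linarith
  · have hq : 0 < q := lt_of_le_of_ne hq0 (Ne.symm hqz)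
    have hMq : q * (1 + δ₁) ≤ M := by
      have h1 := hbudget i
      have h2 : q * (κ i + δ₁) ≤ κ i * M := by
        refine le_trans ?_ h1
        exact mul_le_mul_of_nonneg_left hciκ hq0
      have hκipos := hκpos i
      have hκi1 := hκ1 i
      nlinarith [mul_nonneg (mul_nonneg hq0 hδ₁pos.le) (sub_nonneg.2 hκi1),
        mul_pos hq hδ₁pos]
    obtain ⟨b, hbdef⟩ : ∃ b : ℝ, b = κ j * M / q := ⟨_, rfl⟩
    have hbκ : κ j * (1 + δ₁) ≤ b := by
      rw [hbdef, le_div_iff₀ hq]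
      calc κ j * (1 + δ₁) * q = κ j * (q * (1 + δ₁)) := by ring
      _ ≤ κ j * M := mul_le_mul_of_nonneg_left hMq (hκpos j).le
    have hκjb : κ j < b := by nlinarith [hκpos j]
    by_cases hb1 : 1 ≤ b
    · have haff : 1 * q ≤ κ j * M := by
        rw [hbdef, le_div_iff₀ hq] at hb1
        linarith
      have h1 := hF2 j 1 zero_le_one one_le_two haff
      have h2 := hVhle j
      have h3 := hγle j
      linarith
    · push_neg at hb1
      have hb0 : 0 < b := lt_trans (hκpos j) hκjb
      have haff : b * q ≤ κ j * M := by
        rw [hbdef, div_mul_cancel₀ _ hq.ne']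
      have hφb := hF2 j b hb0.le (by linarith) haff
      -- concavity
      obtain ⟨lam, hlamdef⟩ : ∃ l : ℝ, l = (2 - b) / (2 - κ j) := ⟨_, rfl⟩
      have hκj1 := hκ1 j
      have h2κ : 0 < 2 - κ j := by linarith
      have hlam0 : 0 ≤ lam := by
        rw [hlamdef]
        apply div_nonneg <;> linarith
      have hlam1 : lam ≤ 1 := by
        rw [hlamdef, div_le_one h2κ]
        linarith
      have hcomb : lam * κ j + (1 - lam) * 2 = b := by
        rw [hlamdef]
        field_simp
        ring
      have hconc := (hU j).2.1.2
        (oneC_mem_posCone (hκpos j).le)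
        (oneC_mem_posCone (by norm_num : (0:ℝ) ≤ 2))
        hlam0 (sub_nonneg.2 hlam1) (by ring : lam + (1 - lam) = 1)
      rw [oneC_combo, hcomb] at hconc
      have hconc' : lam * U j (oneC ω (κ j)) + (1 - lam) * U j (oneC ω 2)
          ≤ U j (oneC ω b) := by
        simpa [smul_eq_mul] using hconc
      have hφ12 : U j (oneC ω 1) ≤ U j (oneC ω 2) :=
        phi_mono (hmono j) zero_le_one one_le_two
      have hVhj2 : Vh j ≤ U j (oneC ω 2) := (hVhle j).trans hφ12
      have h1lam : κ₀ * δ₁ / 2 ≤ 1 - lam := by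
        have he : 1 - lam = (b - κ j) / (2 - κ j) := by
          rw [hlamdef]
          field_simp
          ring
        rw [he, le_div_iff₀ h2κ]
        have hbκj : κ₀ * δ₁ ≤ b - κ j := by
          have h1 : κ j * δ₁ ≤ b - κ j := by nlinarith [hκpos j]
          have h2 : κ₀ * δ₁ ≤ κ j * δ₁ :=
            mul_le_mul_of_nonneg_right (hκ₀le j) hδ₁pos.le
          linarith
        nlinarith [mul_nonneg (mul_nonneg hκ₀pos.le hδ₁pos.le) (hκpos j).le]
      have hγj := hγle j
      have hkey : U j (oneC ω (κ j)) + (κ₀ * δ₁ / 2) * γ ≤ U j (oneC ω b) := by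
        have h2 : (1 - lam) * γ ≤ (1 - lam) * (Vh j - U j (oneC ω (κ j))) := by
          apply mul_le_mul_of_nonneg_left _ (by linarith)
          linarith
        have h3 : (κ₀ * δ₁ / 2) * γ ≤ (1 - lam) * γ :=
          mul_le_mul_of_nonneg_right h1lam hγpos.le
        nlinarith
      have hfin : 2 * η₂ < (κ₀ * δ₁ / 2) * γ := by nlinarith
      linarith

end DomLemma
set_option maxHeartbeats 1000000 in
/-- if a competitive configuration `⟨πh,(xh^i)⟩` with `πh ∈ Π_{≤k}` gives
every agent strictly more utility than every competitive allocation of the trivial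
classification `π₀ = {I}`, then there is a `d_ω`-open subset `O` of `Π_{≤k}` containing
`π₀` such that every competitive configuration based on a classification in `O` is
Pareto-dominated by `⟨πh,(xh^i)⟩`. -/
theorem open_set_of_dominated (ω : Measure ℝ) [IsProbabilityMeasure ω]
    (hω : ω (Set.Icc (0 : ℝ) 1) = 1)
    (n : ℕ) (κ : Fin n → ℝ) (hκpos : ∀ i, 0 < κ i) (hκsum : ∑ i, κ i = 1)
    (U : Fin n → Lp ℝ 1 ω → ℝ) (hU : ∀ i, IsUtility ω (U i))
    (k : ℕ) (hk : 1 ≤ k)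
    (π₀ : Classification ω) (hπ₀ : (π₀.parts : Set (Set ℝ)) = {Set.Icc (0 : ℝ) 1})
    (πh : Classification ω) (hπh : πh.parts.card ≤ k)
    (xh : Fin n → Set ℝ → ℝ) (hxh : IsCompetitiveAlloc ω κ U πh xh)
    (hdom : ∀ y : Fin n → Set ℝ → ℝ, IsCompetitiveAlloc ω κ U π₀ y →
      ∀ i, V ω (U i) π₀ (y i) < V ω (U i) πh (xh i)) :
    ∃ O : Set (Classification ω),
      π₀ ∈ O ∧
      (∀ π ∈ O, π.parts.card ≤ k) ∧
      (∀ π ∈ O, ∃ ε : ℝ≥0∞, 0 < ε ∧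
        ∀ ρ : Classification ω, ρ.parts.card ≤ k → dOmega ω π ρ < ε → ρ ∈ O) ∧
      (∀ π ∈ O, ∀ z : Fin n → Set ℝ → ℝ, IsCompetitiveAlloc ω κ U π z →
        ∀ i, V ω (U i) π (z i) < V ω (U i) πh (xh i)) := by
  classical
  -- there is at least one agent
  have hn : Nonempty (Fin n) := by
    rcases Nat.eq_zero_or_pos n with h | h
    · exfalso; subst h; simp at hκsum
    · exact ⟨⟨0, h⟩⟩
  obtain ⟨i₀⟩ := hn
  have huniv : (Finset.univ : Finset (Fin n)).Nonempty := ⟨i₀, Finset.mem_univ i₀⟩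
  have hκ1 : ∀ l, κ l ≤ 1 := by
    intro l
    rw [← hκsum]
    exact Finset.single_le_sum (fun m _ => (hκpos m).le) (Finset.mem_univ l)
  set Vh : Fin n → ℝ := fun l => V ω (U l) πh (xh l) with hVhdef
  -- the κ-proportional allocation is competitive for π₀, hence dominated
  have hκcomp := kappa_competitive hω κ hκpos hκsum U hU hπ₀
  have hγl : ∀ l, 0 < Vh l - U l (oneC ω (κ l)) := by
    intro l
    have h := hdom (fun l _ => κ l) hκcomp l
    rw [V_pi0 hω hπ₀] at h
    simpa [hVhdef] using sub_pos.2 h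
  set γ : ℝ := Finset.univ.inf' huniv (fun l => Vh l - U l (oneC ω (κ l))) with hγdef
  have hγpos : 0 < γ := by
    rw [hγdef, Finset.lt_inf'_iff]
    exact fun l _ => hγl l
  have hγle : ∀ l, U l (oneC ω (κ l)) + γ ≤ Vh l := by
    intro l
    have hthis : γ ≤ Vh l - U l (oneC ω (κ l)) :=
      Finset.inf'_le (fun l => Vh l - U l (oneC ω (κ l))) (Finset.mem_univ l)
    linarith
  set κ₀ : ℝ := Finset.univ.inf' huniv κ with hκ₀def
  have hκ₀pos : 0 < κ₀ := by
    rw [hκ₀def, Finset.lt_inf'_iff]; exact fun l _ => hκpos l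
  have hκ₀le : ∀ l, κ₀ ≤ κ l := fun l => Finset.inf'_le _ (Finset.mem_univ l)
  -- uniform continuity radii
  have hη₁pos : 0 < γ / 8 := by linarith
  choose δ₁f hδ₁fpos hδ₁f using fun l => Ucont hω (hU l).1 hη₁pos
  set δ₁ : ℝ := min 1 (Finset.univ.inf' huniv δ₁f) with hδ₁def
  have hδ₁pos : 0 < δ₁ := by
    rw [hδ₁def, lt_min_iff]
    refine ⟨one_pos, ?_⟩
    rw [Finset.lt_inf'_iff]; exact fun l _ => hδ₁fpos l
  have hδ₁le : ∀ l, δ₁ ≤ δ₁f l := fun l =>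
    (min_le_right _ _).trans (Finset.inf'_le _ (Finset.mem_univ l))
  have hδ₁1 : δ₁ ≤ 1 := min_le_left _ _
  set η₂ : ℝ := min (γ / 8) (γ * κ₀ * δ₁ / 16) with hη₂def
  have hη₂pos : 0 < η₂ := by
    rw [hη₂def, lt_min_iff]
    constructor
    · linarith
    · positivity
  have hη₂le₁ : η₂ ≤ γ / 8 := min_le_left _ _
  have hη₂le₂ : η₂ ≤ γ * κ₀ * δ₁ / 16 := min_le_right _ _
  choose δ₂f hδ₂fpos hδ₂f using fun l => Ucont hω (hU l).1 hη₂pos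
  set δ₂ : ℝ := Finset.univ.inf' huniv δ₂f with hδ₂def
  have hδ₂pos : 0 < δ₂ := by
    rw [hδ₂def, Finset.lt_inf'_iff]; exact fun l _ => hδ₂fpos l
  have hδ₂le : ∀ l, δ₂ ≤ δ₂f l := fun l => Finset.inf'_le _ (Finset.mem_univ l)
  set εR : ℝ := min (δ₂ / 2) (1 / (4 * k)) with hεRdef
  have hεRpos : 0 < εR := by
    rw [hεRdef, lt_min_iff]
    constructor
    · linarith
    · have : (0:ℝ) < k := by exact_mod_cast hk
      positivity
  -- Vh is at most the utility of the whole endowment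
  have hVhle : ∀ l, Vh l ≤ U l (oneC ω 1) := by
    intro l
    obtain ⟨ph, hh1, hh2, hh3, hh4, hh5⟩ := hxh
    refine V_le_one hω (hU l).2.2 πh (xh l) (hh2 l) ?_
    intro C hC
    refine le_trans ?_ (hh3 C hC)
    exact Finset.single_le_sum (fun m _ => hh2 m C hC) (Finset.mem_univ l)
  -- the open set
  set O : Set (Classification ω) :=
    {π | π.parts.card ≤ k ∧ dOmega ω π₀ π < ENNReal.ofReal εR} with hOdef
  have hπ₀card : π₀.parts.card ≤ k := by
    rw [parts_eq_singleton hπ₀, Finset.card_singleton]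
    exact hk
  refine ⟨O, ⟨hπ₀card, by rw [dOmega_self]; exact ENNReal.ofReal_pos.2 hεRpos⟩,
    fun π hπ => hπ.1, ?_, ?_⟩
  · -- openness
    intro π hπ
    refine ⟨ENNReal.ofReal εR - dOmega ω π₀ π, ?_, ?_⟩
    · rw [tsub_pos_iff_lt]
      exact hπ.2
    · intro ρ hρcard hρd
      refine ⟨hρcard, ?_⟩
      have htri := dOmega_triangle (ω := ω) π₀ π ρ
      have hne : dOmega ω π₀ π ≠ ⊤ := hπ.2.ne_top
      calc dOmega ω π₀ ρ ≤ dOmega ω π₀ π + dOmega ω π ρ := htri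
      _ < dOmega ω π₀ π + (ENNReal.ofReal εR - dOmega ω π₀ π) :=
          ENNReal.add_lt_add_left hne hρd
      _ = ENNReal.ofReal εR := add_tsub_cancel_of_le hπ.2.le
  · -- main domination bound
    intro π hπ z hz i
    -- geometry: a big part C₀
    have hdlt : deltaOmega ω π π₀ < ENNReal.ofReal εR :=
      lt_of_le_of_lt (le_max_right _ _) hπ.2
    have hdich : ∀ C ∈ π.parts,
        ω C < ENNReal.ofReal εR ∨ ω (Icc (0:ℝ) 1 \ C) < ENNReal.ofReal εR := by
      intro C hC
      have h1 : (⨅ C' ∈ sigmaAlg π₀, ω (C ∆ C')) < ENNReal.ofReal εR :=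
        lt_of_le_of_lt (le_iSup₂_of_le C (mem_sigmaAlg_self hC) le_rfl) hdlt
      simp only [iInf_lt_iff] at h1
      obtain ⟨C', hC', hlt⟩ := h1
      rcases sigmaAlg_pi0 hπ₀ hC' with rfl | rfl
      · left
        rwa [show C ∆ (∅ : Set ℝ) = C from by simp [Set.symmDiff_def]] at hlt
      · right
        have hsub := part_subset π hC
        have heq : C ∆ Icc (0:ℝ) 1 = Icc (0:ℝ) 1 \ C := by
          rw [Set.symmDiff_def, Set.diff_eq_empty.2 hsub]
          simp [Set.sup_eq_union]
        rwa [heq] at hlt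
    have hsum1 : ∑ C ∈ π.parts, ω C = 1 := by rw [meas_parts_sum, hω]
    have hex : ∃ C₀ ∈ π.parts, ¬ (ω C₀ < ENNReal.ofReal εR) := by
      by_contra hco
      push_neg at hco
      have h2 : (1:ℝ≥0∞) ≤ π.parts.card • ENNReal.ofReal εR := by
        rw [← hsum1]
        exact Finset.sum_le_card_nsmul _ _ _ (fun C hC => (hco C hC).le)
      rw [nsmul_eq_mul] at h2
      have h3 : (π.parts.card : ℝ≥0∞) * ENNReal.ofReal εR
          ≤ (k : ℝ≥0∞) * ENNReal.ofReal εR := by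
        gcongr
        exact_mod_cast hπ.1
      have h4 : (k:ℝ≥0∞) * ENNReal.ofReal εR = ENNReal.ofReal ((k:ℝ) * εR) := by
        rw [ENNReal.ofReal_mul (by positivity)]
        congr 1
        simp [ENNReal.ofReal_natCast]
      have hkR : (0:ℝ) < k := by exact_mod_cast hk
      have hk0 : (k:ℝ) ≠ 0 := hkR.ne'
      have h5 : (k:ℝ) * εR ≤ 1/4 := by
        have h6 : εR ≤ 1/(4*k) := min_le_right _ _
        calc (k:ℝ)*εR ≤ k * (1/(4*k)) := mul_le_mul_of_nonneg_left h6 hkR.le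
        _ = 1/4 := by field_simp
      have h7 : (1:ℝ≥0∞) ≤ ENNReal.ofReal (1/4) := by
        refine (h2.trans h3).trans ?_
        rw [h4]
        exact ENNReal.ofReal_le_ofReal h5
      have h8 : ENNReal.ofReal (1/4 : ℝ) < 1 := by
        rw [ENNReal.ofReal_lt_one]
        norm_num
      exact absurd h7 (not_le.2 h8)
    obtain ⟨C₀, hC₀, hC₀big⟩ := hex
    have hsmall_enn : ω (Icc (0:ℝ) 1 \ C₀) < ENNReal.ofReal εR :=
      (hdich C₀ hC₀).resolve_left hC₀big
    have hS : (ω (Icc (0:ℝ) 1 \ C₀)).toReal ≤ εR := by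
      have := ENNReal.toReal_mono ENNReal.ofReal_ne_top hsmall_enn.le
      rwa [ENNReal.toReal_ofReal hεRpos.le] at this
    have hsmallδ : ∀ l, 2 * (ω (Icc (0:ℝ) 1 \ C₀)).toReal ≤ δ₂f l := by
      intro l
      have h1 : εR ≤ δ₂ / 2 := min_le_left _ _
      have h2 := hδ₂le l
      linarith
    obtain ⟨p, heq⟩ := hz
    exact domination hω κ hκpos hκ1 hκsum U hU Vh γ κ₀ δ₁ η₂ hγpos hκ₀pos hκ₀le
      hδ₁pos hδ₁1 hη₂pos hη₂le₁ hη₂le₂ δ₁f δ₂f hδ₁le hδ₁f hδ₂f hγle hVhle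
      π hC₀ hsmallδ p z heq i

end
end

section
/- In the three-agent economy with claims κ₁ = κ₂ = κ₃ = 1/3 and linear utilities given by ν₁(F) = 3λ(F ∩ [0,1/3]) and ν₂ = ν₃ with ν₂(F) = 3λ(F ∩ [1/3,1/2)) + λ(F ∩ [1/2,1]): (a) for π = {A,B} with A = [0,1/2), B = [1/2,1], the prices p_A = p_B = 1 together with x¹ = (1/3,0), x² = x³ = (1/12,1/4) form a competitive equilibrium of E(π), with utilities V₁(π,x¹) = 2/3 and V₂(π,x²) = V₃(π,x³) = 1/3; (b) for ρ = {A′,B′} with A′ = [0,1/3), B′ = [1/3,1], the prices q_{A′} = q_{B′} = 1 together with y¹ = (1/3,0), y² = y³ = (0,1/3) form a competitive equilibrium of E(ρ), with utilities V₁(ρ,y¹) = 1 and V₂(ρ,y²) = V₃(ρ,y³) = 1/2; consequently, the competitive configuration ⟨ρ,(y^i)⟩ Pareto-dominates ⟨π,(x^i)⟩. -/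
open MeasureTheory Set
open scoped ENNReal Classical

noncomputable section

/-- Lebesgue measure of a set, as a real number. -/
def lvol (C : Set ℝ) : ℝ := (volume C).toReal

/-- Linear utility over tradable bundles: `V(π,x) = ∑_{C∈π} (x_C/λ(C)) ν(C)`,
where the evaluation of each commodity is given by the set function `νf`. -/
def Vlin (parts : Finset (Set ℝ)) (νf : Set ℝ → ℝ) (x : Set ℝ → ℝ) : ℝ :=
  ∑ C ∈ parts, (x C / lvol C) * νf C

/-- Competitive equilibrium of the economy on the commodities `parts` with claims `κ`
and utilities `Vf` on tradable bundles. -/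
def IsEqm {n : ℕ} (parts : Finset (Set ℝ)) (κ : Fin n → ℝ)
    (Vf : Fin n → (Set ℝ → ℝ) → ℝ) (p : Set ℝ → ℝ) (x : Fin n → Set ℝ → ℝ) : Prop :=
  (∀ C ∈ parts, 0 ≤ p C) ∧
  (∀ i, ∀ C ∈ parts, 0 ≤ x i C) ∧
  (∀ C ∈ parts, ∑ i, x i C ≤ lvol C) ∧
  (∀ i, ∑ C ∈ parts, p C * x i C ≤ κ i * ∑ C ∈ parts, p C * lvol C) ∧
  (∀ i, ∀ y : Set ℝ → ℝ, (∀ C ∈ parts, 0 ≤ y C) → Vf i (x i) < Vf i y →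
    κ i * ∑ C ∈ parts, p C * lvol C < ∑ C ∈ parts, p C * y C)

namespace Stmt10

/-- Agent 1's evaluation measure: `ν₁(F) = 3 λ(F ∩ [0,1/3])`. -/
def ν₁ (F : Set ℝ) : ℝ := 3 * lvol (F ∩ Set.Icc 0 (1/3))

/-- Agents 2 and 3's evaluation measure:
`ν₂(F) = 3 λ(F ∩ [1/3,1/2)) + λ(F ∩ [1/2,1])`. -/
def ν₂ (F : Set ℝ) : ℝ :=
  3 * lvol (F ∩ Set.Ico (1/3) (1/2)) + lvol (F ∩ Set.Icc (1/2) 1)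

/-- The evaluation measures of the three agents. -/
def νs : Fin 3 → Set ℝ → ℝ := ![ν₁, ν₂, ν₂]

/-- Equal claims `κᵢ = 1/3`. -/
def κ : Fin 3 → ℝ := fun _ => 1/3

def A : Set ℝ := Set.Ico 0 (1/2)
def B : Set ℝ := Set.Icc (1/2) 1
/-- The classification `π = {A,B}`. -/
def partsπ : Finset (Set ℝ) := {A, B}

def A' : Set ℝ := Set.Ico 0 (1/3)
def B' : Set ℝ := Set.Icc (1/3) 1
/-- The classification `ρ = {A′,B′}`. -/
def partsρ : Finset (Set ℝ) := {A', B'}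

/-- `x¹ = (1/3,0)`, `x² = x³ = (1/12,1/4)`. -/
def xs : Fin 3 → Set ℝ → ℝ :=
  ![fun C => if C = A then 1/3 else 0,
    fun C => if C = A then 1/12 else if C = B then 1/4 else 0,
    fun C => if C = A then 1/12 else if C = B then 1/4 else 0]

/-- `y¹ = (1/3,0)`, `y² = y³ = (0,1/3)`. -/
def ys : Fin 3 → Set ℝ → ℝ :=
  ![fun C => if C = A' then 1/3 else 0,
    fun C => if C = B' then 1/3 else 0,
    fun C => if C = B' then 1/3 else 0]

-- AUX START
lemma lvol_Ico {a b : ℝ} (h : a ≤ b) : lvol (Ico a b) = b - a := by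
  rw [lvol, Real.volume_Ico, ENNReal.toReal_ofReal (by linarith)]

lemma lvol_Icc {a b : ℝ} (h : a ≤ b) : lvol (Icc a b) = b - a := by
  rw [lvol, Real.volume_Icc, ENNReal.toReal_ofReal (by linarith)]

lemma lvol_empty : lvol (∅ : Set ℝ) = 0 := by simp [lvol]

lemma lvol_singleton (a : ℝ) : lvol ({a} : Set ℝ) = 0 := by simp [lvol]

lemma hAB : A ≠ B := by
  intro h
  have h0 : (0:ℝ) ∈ A := by norm_num [A]
  rw [h] at h0
  norm_num [B] at h0

lemma hBA : B ≠ A := fun h => hAB h.symm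

lemma hA'B' : A' ≠ B' := by
  intro h
  have h0 : (0:ℝ) ∈ A' := by norm_num [A']
  rw [h] at h0
  norm_num [B'] at h0

lemma hB'A' : B' ≠ A' := fun h => hA'B' h.symm

lemma xs0 (C : Set ℝ) : xs 0 C = if C = A then 1/3 else 0 := rfl
lemma xs1 (C : Set ℝ) : xs 1 C = if C = A then 1/12 else if C = B then 1/4 else 0 := rfl
lemma xs2 (C : Set ℝ) : xs 2 C = if C = A then 1/12 else if C = B then 1/4 else 0 := rfl
lemma ys0 (C : Set ℝ) : ys 0 C = if C = A' then 1/3 else 0 := rfl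
lemma ys1 (C : Set ℝ) : ys 1 C = if C = B' then 1/3 else 0 := rfl
lemma ys2 (C : Set ℝ) : ys 2 C = if C = B' then 1/3 else 0 := rfl
lemma νs0 : νs 0 = ν₁ := rfl
lemma νs1 : νs 1 = ν₂ := rfl
lemma νs2 : νs 2 = ν₂ := rfl

lemma lvolA : lvol A = 1/2 := by rw [A, lvol_Ico (by norm_num)]; norm_num
lemma lvolB : lvol B = 1/2 := by rw [B, lvol_Icc (by norm_num)]; norm_num
lemma lvolA' : lvol A' = 1/3 := by rw [A', lvol_Ico (by norm_num)]; norm_num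
lemma lvolB' : lvol B' = 2/3 := by rw [B', lvol_Icc (by norm_num)]; norm_num

lemma ν₁A : ν₁ A = 1 := by
  have e : A ∩ Icc 0 (1/3) = Icc (0:ℝ) (1/3) :=
    inter_eq_right.mpr (Icc_subset_Ico_right (by norm_num))
  rw [ν₁, e, lvol_Icc (by norm_num)]; norm_num

lemma ν₁B : ν₁ B = 0 := by
  have e : B ∩ Icc 0 (1/3) = (∅ : Set ℝ) := by
    rw [eq_empty_iff_forall_notMem]
    rintro x ⟨hx1, hx2⟩
    rw [B, mem_Icc] at hx1; rw [mem_Icc] at hx2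
    linarith [hx1.1, hx2.2]
  rw [ν₁, e, lvol_empty]; ring

lemma ν₂A : ν₂ A = 1/2 := by
  have e1 : A ∩ Ico (1/3) (1/2) = Ico (1/3 : ℝ) (1/2) :=
    inter_eq_right.mpr (Ico_subset_Ico_left (by norm_num))
  have e2 : A ∩ Icc (1/2) 1 = (∅ : Set ℝ) := by
    rw [eq_empty_iff_forall_notMem]
    rintro x ⟨hx1, hx2⟩
    rw [A, mem_Ico] at hx1; rw [mem_Icc] at hx2
    linarith [hx1.2, hx2.1]
  rw [ν₂, e1, e2, lvol_empty, lvol_Ico (by norm_num)]; norm_num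

lemma ν₂B : ν₂ B = 1/2 := by
  have e1 : B ∩ Ico (1/3) (1/2) = (∅ : Set ℝ) := by
    rw [eq_empty_iff_forall_notMem]
    rintro x ⟨hx1, hx2⟩
    rw [B, mem_Icc] at hx1; rw [mem_Ico] at hx2
    linarith [hx1.1, hx2.2]
  have e2 : B ∩ Icc (1/2) 1 = B := inter_eq_left.mpr (by rw [B])
  rw [ν₂, e1, e2, lvol_empty, lvolB]; norm_num

lemma ν₁A' : ν₁ A' = 1 := by
  have e : A' ∩ Icc 0 (1/3) = A' := inter_eq_left.mpr (by rw [A']; exact Ico_subset_Icc_self)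
  rw [ν₁, e, lvolA']; norm_num

lemma ν₁B' : ν₁ B' = 0 := by
  have e : B' ∩ Icc 0 (1/3) = ({(1/3 : ℝ)} : Set ℝ) := by
    ext x
    simp only [B', mem_inter_iff, mem_Icc, mem_singleton_iff]
    constructor
    · rintro ⟨⟨h1, _⟩, _, h4⟩; linarith
    · rintro rfl; norm_num
  rw [ν₁, e, lvol_singleton]; ring

lemma ν₂A' : ν₂ A' = 0 := by
  have e1 : A' ∩ Ico (1/3) (1/2) = (∅ : Set ℝ) := by
    rw [eq_empty_iff_forall_notMem]
    rintro x ⟨hx1, hx2⟩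
    rw [A', mem_Ico] at hx1; rw [mem_Ico] at hx2
    linarith [hx1.2, hx2.1]
  have e2 : A' ∩ Icc (1/2) 1 = (∅ : Set ℝ) := by
    rw [eq_empty_iff_forall_notMem]
    rintro x ⟨hx1, hx2⟩
    rw [A', mem_Ico] at hx1; rw [mem_Icc] at hx2
    linarith [hx1.2, hx2.1]
  rw [ν₂, e1, e2, lvol_empty]; ring

lemma ν₂B' : ν₂ B' = 1 := by
  have e1 : B' ∩ Ico (1/3) (1/2) = Ico (1/3 : ℝ) (1/2) := by
    apply inter_eq_right.mpr
    rintro x hx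
    rw [mem_Ico] at hx
    rw [B', mem_Icc]
    constructor <;> linarith [hx.1, hx.2]
  have e2 : B' ∩ Icc (1/2) 1 = Icc (1/2 : ℝ) 1 := by
    apply inter_eq_right.mpr
    exact fun x hx => by rw [mem_Icc] at hx; rw [B', mem_Icc]; constructor <;> linarith [hx.1, hx.2]
  rw [ν₂, e1, e2, lvol_Ico (by norm_num), lvol_Icc (by norm_num)]; norm_num

lemma Vπ (f x : Set ℝ → ℝ) : Vlin partsπ f x = 2 * x A * f A + 2 * x B * f B := by
  rw [Vlin, partsπ, Finset.sum_pair hAB, lvolA, lvolB]; ring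

lemma Vρ (f x : Set ℝ → ℝ) : Vlin partsρ f x = 3 * x A' * f A' + (3/2) * x B' * f B' := by
  rw [Vlin, partsρ, Finset.sum_pair hA'B', lvolA', lvolB']; ring

lemma sumπ (g : Set ℝ → ℝ) : ∑ C ∈ partsπ, g C = g A + g B := by
  rw [partsπ, Finset.sum_pair hAB]

lemma sumρ (g : Set ℝ → ℝ) : ∑ C ∈ partsρ, g C = g A' + g B' := by
  rw [partsρ, Finset.sum_pair hA'B']
-- AUX END

/-- (a) unit prices and `(x^i)` form a competitive equilibrium of `E(π)`
with utilities `(2/3, 1/3, 1/3)`; (b) unit prices and `(y^i)` form a competitive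
equilibrium of `E(ρ)` with utilities `(1, 1/2, 1/2)`; consequently `⟨ρ,(y^i)⟩`
Pareto-dominates `⟨π,(x^i)⟩`. -/
theorem conflation_pareto_dominated :
    IsEqm partsπ κ (fun i => Vlin partsπ (νs i)) (fun _ => 1) xs ∧
    Vlin partsπ ν₁ (xs 0) = 2/3 ∧
    Vlin partsπ ν₂ (xs 1) = 1/3 ∧ Vlin partsπ ν₂ (xs 2) = 1/3 ∧
    IsEqm partsρ κ (fun i => Vlin partsρ (νs i)) (fun _ => 1) ys ∧
    Vlin partsρ ν₁ (ys 0) = 1 ∧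
    Vlin partsρ ν₂ (ys 1) = 1/2 ∧ Vlin partsρ ν₂ (ys 2) = 1/2 ∧
    ((∀ i, Vlin partsπ (νs i) (xs i) ≤ Vlin partsρ (νs i) (ys i)) ∧
      ∃ i, Vlin partsπ (νs i) (xs i) < Vlin partsρ (νs i) (ys i)) := by
  have hmemA : A ∈ partsπ := by simp [partsπ]
  have hmemB : B ∈ partsπ := by simp [partsπ]
  have hmemA' : A' ∈ partsρ := by simp [partsρ]
  have hmemB' : B' ∈ partsρ := by simp [partsρ]
  refine ⟨⟨fun C _ => by norm_num, ?_, ?_, ?_, ?_⟩, ?_, ?_, ?_,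
    ⟨fun C _ => by norm_num, ?_, ?_, ?_, ?_⟩, ?_, ?_, ?_, ?_, ?_⟩
  · -- x nonneg
    intro i C hC
    fin_cases i <;> simp only [Fin.zero_eta, Fin.mk_one, Fin.reduceFinMk, Fin.isValue] <;>
      [rw [xs0]; rw [xs1]; rw [xs2]] <;> split_ifs <;> norm_num
  · -- feasibility π
    intro C hC
    rw [partsπ, Finset.mem_insert, Finset.mem_singleton] at hC
    rw [Fin.sum_univ_three, xs0, xs1, xs2]
    rcases hC with rfl | rfl <;> simp [hBA, lvolA, lvolB] <;> norm_num
  · -- budget π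
    intro i
    rw [sumπ, sumπ, lvolA, lvolB]
    fin_cases i <;> simp only [Fin.zero_eta, Fin.mk_one, Fin.reduceFinMk, Fin.isValue] <;> rw [κ] <;>
      [rw [xs0, xs0]; rw [xs1, xs1]; rw [xs2, xs2]] <;>
      simp [hBA] <;> norm_num
  · -- maximality π
    intro i y hy hV
    have hyA := hy A hmemA
    have hyB := hy B hmemB
    rw [sumπ, sumπ, lvolA, lvolB]
    simp only [one_mul, κ]
    fin_cases i <;> simp only [Fin.zero_eta, Fin.mk_one, Fin.reduceFinMk, Fin.isValue] at hV
    · rw [νs0, Vπ, Vπ, ν₁A, ν₁B] at hV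
      rw [xs0, xs0, if_pos rfl, if_neg hBA] at hV
      linarith
    · rw [νs1, Vπ, Vπ, ν₂A, ν₂B] at hV
      rw [xs1, xs1, if_pos rfl, if_neg hBA, if_pos rfl] at hV
      linarith
    · rw [νs2, Vπ, Vπ, ν₂A, ν₂B] at hV
      rw [xs2, xs2, if_pos rfl, if_neg hBA, if_pos rfl] at hV
      linarith
  · rw [Vπ, ν₁A, ν₁B, xs0, xs0, if_pos rfl, if_neg hBA]; norm_num
  · rw [Vπ, ν₂A, ν₂B, xs1, xs1, if_pos rfl, if_neg hBA, if_pos rfl]; norm_num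
  · rw [Vπ, ν₂A, ν₂B, xs2, xs2, if_pos rfl, if_neg hBA, if_pos rfl]; norm_num
  · -- y nonneg
    intro i C hC
    fin_cases i <;> simp only [Fin.zero_eta, Fin.mk_one, Fin.reduceFinMk, Fin.isValue] <;>
      [rw [ys0]; rw [ys1]; rw [ys2]] <;> split_ifs <;> norm_num
  · -- feasibility ρ
    intro C hC
    rw [partsρ, Finset.mem_insert, Finset.mem_singleton] at hC
    rw [Fin.sum_univ_three, ys0, ys1, ys2]
    rcases hC with rfl | rfl <;> norm_num [hA'B', hB'A', lvolA', lvolB']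
  · -- budget ρ
    intro i
    rw [sumρ, sumρ, lvolA', lvolB']
    fin_cases i <;> simp only [Fin.zero_eta, Fin.mk_one, Fin.reduceFinMk, Fin.isValue] <;> rw [κ] <;>
      [rw [ys0, ys0]; rw [ys1, ys1]; rw [ys2, ys2]] <;>
      simp [hA'B', hB'A'] <;> norm_num
  · -- maximality ρ
    intro i y hy hV
    have hyA := hy A' hmemA'
    have hyB := hy B' hmemB'
    rw [sumρ, sumρ, lvolA', lvolB']
    simp only [one_mul, κ]
    fin_cases i <;> simp only [Fin.zero_eta, Fin.mk_one, Fin.reduceFinMk, Fin.isValue] at hV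
    · rw [νs0, Vρ, Vρ, ν₁A', ν₁B'] at hV
      rw [ys0, ys0, if_pos rfl, if_neg hB'A'] at hV
      linarith
    · rw [νs1, Vρ, Vρ, ν₂A', ν₂B'] at hV
      rw [ys1, ys1, if_neg hA'B', if_pos rfl] at hV
      linarith
    · rw [νs2, Vρ, Vρ, ν₂A', ν₂B'] at hV
      rw [ys2, ys2, if_neg hA'B', if_pos rfl] at hV
      linarith
  · rw [Vρ, ν₁A', ν₁B', ys0, ys0, if_pos rfl, if_neg hB'A']; norm_num
  · rw [Vρ, ν₂A', ν₂B', ys1, ys1, if_neg hA'B', if_pos rfl]; norm_num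
  · rw [Vρ, ν₂A', ν₂B', ys2, ys2, if_neg hA'B', if_pos rfl]; norm_num
  · intro i
    fin_cases i <;> simp only [Fin.zero_eta, Fin.mk_one, Fin.reduceFinMk, Fin.isValue]
    · rw [νs0, Vπ, Vρ, ν₁A, ν₁B, ν₁A', ν₁B']
      rw [xs0, xs0, ys0, ys0, if_pos rfl, if_neg hBA, if_pos rfl, if_neg hB'A']
      norm_num
    · rw [νs1, Vπ, Vρ, ν₂A, ν₂B, ν₂A', ν₂B']
      rw [xs1, xs1, ys1, ys1, if_pos rfl, if_neg hBA, if_pos rfl, if_neg hA'B', if_pos rfl]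
      norm_num
    · rw [νs2, Vπ, Vρ, ν₂A, ν₂B, ν₂A', ν₂B']
      rw [xs2, xs2, ys2, ys2, if_pos rfl, if_neg hBA, if_pos rfl, if_neg hA'B', if_pos rfl]
      norm_num
  · refine ⟨0, ?_⟩
    rw [νs0, Vπ, Vρ, ν₁A, ν₁B, ν₁A', ν₁B']
    rw [xs0, xs0, ys0, ys0, if_pos rfl, if_neg hBA, if_pos rfl, if_neg hB'A']
    norm_num


end Stmt10

end
end
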